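/- arXiv:2207.08108 — 8 statements merged into one kernel-verified Lean document; each statement's English description precedes it below -/
import Mathlib

section
/- Let P(z) = a_0 + a_1 z + a_2 z² + a_3 z³ be a complex polynomial of degree 3 with a_k ∈ ℂ \ {0} for k = 0,1,2,3. If |q_2(P)| > √(9 + 6√3) and |q_3(P)| > √(9 + 6√3), then all three zeros of P are simple; moreover, the moduli of the zeros of P are pairwise different. -/
set_option maxHeartbeats 1000000

private lemma lt_of_mul_self_lt (X Y : ℝ) (hY : 0 < Y) (h : X*X < Y*Y) : X < Y := by
  by_contra hc
  push_neg at hc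
  nlinarith [mul_le_mul hc hc hY.le (by linarith : (0:ℝ) ≤ X)]

lemma key_real (s q u r x a b : ℝ) (hs : s^2 = 3) (hs0 : 0 < s)
    (hq : q^2 = 9 + 6*s) (hq0 : 0 < q)
    (hu0 : 0 ≤ u) (hu2 : u ≤ 2) (hr0 : 0 < r) (hr1 : r ≤ 1)
    (hx1 : -r ≤ x) (hx2 : x ≤ r)
    (ha : a = u^2 + r^2 + 2*u*x) (hb : b = 1 + u^2*r^2 + 2*u*x)
    (ha0 : 0 < a) (hb0 : 0 ≤ b)
    (H1 : (9+6*s)*b < a^2) (H2 : (9+6*s)*a*r^2 < b^2) : False := by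
  have hs18 : s < 1.8 := by
    by_contra hc
    push_neg at hc
    have h := mul_le_mul hc hc (by norm_num) (by linarith)
    linarith [h, hs]
  have hq3 : 3 < q := by
    by_contra hc
    push_neg at hc
    have h := mul_le_mul hc hc hq0.le (by norm_num)
    linarith [h, hq, hs0]
  have hQ0 : (0:ℝ) < 9+6*s := by linarith
  set m := Real.sqrt a with hmdef
  have hm0 : 0 < m := Real.sqrt_pos.2 ha0
  have hm2 : m^2 = a := Real.sq_sqrt ha0.le
  have hxu1 := mul_le_mul_of_nonneg_left hx1 hu0
  have hxu2 := mul_le_mul_of_nonneg_left hx2 hu0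
  have hr2pos : (0:ℝ) ≤ 1 - r^2 := by
    have h := mul_self_le_mul_self hr0.le hr1
    linarith [h]
  have hmur : m ≤ u + r := by
    have h1 : a ≤ (u+r)^2 := by linarith [hxu2]
    have h2 := Real.sqrt_le_sqrt h1
    rwa [Real.sqrt_sq (by linarith)] at h2
  have hmlb : u - r ≤ m := by
    have h1 : (u-r)^2 ≤ a := by linarith [hxu1]
    have h2 : |u - r| ≤ m := by
      rw [← Real.sqrt_sq_eq_abs]; exact Real.sqrt_le_sqrt h1
    exact le_trans (le_abs_self _) h2
  have hm3 : m ≤ 3 := by linarith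
  have hb_eq : b = a - (u^2-1)*(1-r^2) := by rw [ha, hb]; ring
  -- P1 : q^3 * r < m^3
  have hP1 : q^3*r < m^3 := by
    have e1 : ((9+6*s)*b)*((9+6*s)*b) < a^2*a^2 :=
      mul_self_lt_mul_self (mul_nonneg hQ0.le hb0) H1
    have e2 : ((9+6*s)*(9+6*s))*((9+6*s)*a*r^2) < ((9+6*s)*(9+6*s))*b^2 :=
      mul_lt_mul_of_pos_left H2 (by positivity)
    have e3 : (9+6*s)^3*r^2 < a^3 := by
      have h3 : (9+6*s)^3*r^2 * a < a^3 * a := by linarith [e1, e2]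
      exact lt_of_mul_lt_mul_right h3 ha0.le
    have hq6 : q^3*q^3 = (9+6*s)^3 := by
      linear_combination (q^4 + (9+6*s)*q^2 + (9+6*s)^2) * hq
    have hm6 : m^3*m^3 = a^3 := by linear_combination (m^4 + a*m^2 + a^2) * hm2
    have hq6r : q^3*r*(q^3*r) = (9+6*s)^3*r^2 := by linear_combination r^2 * hq6
    exact lt_of_mul_self_lt _ _ (by positivity) (by linarith [e3, hq6r, hm6])
  -- P3 -> hbr : q*(1 - r*m - r^2) < m^2
  have hbr : q*(1 - r*m - r^2) < m^2 := by
    have humr : u ≤ m + r := by linarith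
    have hk : (u^2-1)*(1-r^2) ≤ ((m+r)^2-1)*(1-r^2) := by
      apply mul_le_mul_of_nonneg_right _ hr2pos
      have h := mul_self_le_mul_self hu0 humr
      linarith [h]
    have hsq : (1 - r*m - r^2)^2 = a - ((m+r)^2-1)*(1-r^2) := by
      linear_combination hm2
    have step : (9+6*s)*(1 - r*m - r^2)^2 ≤ (9+6*s)*b := by
      rw [hsq, hb_eq]
      exact mul_le_mul_of_nonneg_left (by linarith) hQ0.le
    apply lt_of_mul_self_lt _ _ (by positivity)
    calc (q*(1-r*m-r^2))*(q*(1-r*m-r^2)) = (9+6*s)*(1-r*m-r^2)^2 := by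
          linear_combination ((1-r*m-r^2)^2) * hq
    _ ≤ (9+6*s)*b := step
    _ < a^2 := H1
    _ = m^2*m^2 := by rw [hm2]; ring
  -- key identities
  have key1 : ((1+s)*(q-3)/2)^2 - 2*q*((1+s)*(q-3)/2) + 3*q = 0 := by
    linear_combination ((3:ℝ)/2 - 3/2*q + 3/2*s) * hs + (-(3:ℝ)/4 - s/2 + s^2/4) * hq
  have key2 : ((1+s)*(q-3)/2)^3 + q^3*((1+s)*(q-3)/2) - 2*q^3 = 0 := by
    linear_combination ((-9:ℝ) + 9*q - 63/4*s + 27/4*s*q - 27/4*s^2 + 3/4*s^2*q) * hs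
      + ((27:ℝ)/8 - 27/8*q + 1/2*q^2 + 33/8*s - 9/8*s*q + 1/2*s*q^2 - 3/8*s^2
         + 3/8*s^2*q - 9/8*s^3 + 1/8*s^3*q) * hq
  set M := (1+s)*(q-3)/2 with hMdef
  have key3 : M^6 + q^3*M^4 + q^5*M^2 - q^6 = 0 := by
    linear_combination (M^3 + 2*q^3) * key2 + q^5 * key1
  have hM0 : 0 < M := by
    have := mul_pos (by linarith : (0:ℝ) < 1+s) (by linarith : (0:ℝ) < q-3)
    rw [hMdef]; linarith
  have hM2q : M < 2*q - 3 := by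
    have := mul_lt_mul_of_pos_right (show s < 3 by linarith)
      (show (0:ℝ) < q-3 by linarith)
    rw [hMdef]; linarith [this]
  -- step 3 : M < m
  have hMm : M < m := by
    have t1 : q^3*r*(q^3*m) < m^3*(q^3*m) :=
      mul_lt_mul_of_pos_right hP1 (by positivity)
    have t2 : (q^3*r)*(q^3*r) < m^3*m^3 :=
      mul_self_lt_mul_self (by positivity) hP1
    have t3 : q^5*(q*(1-r*m-r^2)) < q^5*m^2 :=
      mul_lt_mul_of_pos_left hbr (by positivity)
    have hPsi : q^6 < m^6 + q^3*m^4 + q^5*m^2 := by linarith [t1, t2, t3]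
    by_contra hcon
    push_neg at hcon
    have c2 : m^2 ≤ M^2 := by
      have h := mul_self_le_mul_self hm0.le hcon
      linarith [h]
    have c4 : (m^2)^2 ≤ (M^2)^2 := pow_le_pow_left₀ (sq_nonneg m) c2 2
    have c6 : (m^2)^3 ≤ (M^2)^3 := pow_le_pow_left₀ (sq_nonneg m) c2 3
    have l1 : q^3*(m^2)^2 ≤ q^3*(M^2)^2 := mul_le_mul_of_nonneg_left c4 (by positivity)
    have l2 : q^5*m^2 ≤ q^5*M^2 := mul_le_mul_of_nonneg_left c2 (by positivity)
    linarith [c6, l1, l2, hPsi, key3]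
  -- step 4/5 : m < M
  have hquad : 0 < m^2 - 2*q*m + 3*q := by
    rcases le_or_gt 2 (m+r) with hc | hc
    · have hr2 : (2-m)^2 ≤ r^2 := by
        have hp := mul_nonneg (by linarith : (0:ℝ) ≤ r-(2-m)) (by linarith : (0:ℝ) ≤ r+(2-m))
        linarith [hp]
      have hk2 : (u^2-1)*(1-r^2) ≤ 3*(1-r^2) := by
        apply mul_le_mul_of_nonneg_right _ hr2pos
        have h := mul_self_le_mul_self hu0 hu2
        linarith [h]
      have hble : (2*m-3)^2 ≤ b := by
        rw [hb_eq]
        linarith [hk2, hr2, hm2]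
      have step : (9+6*s)*(2*m-3)^2 ≤ (9+6*s)*b :=
        mul_le_mul_of_nonneg_left hble hQ0.le
      have h2m : q*(2*m-3) < m^2 := by
        apply lt_of_mul_self_lt _ _ (by positivity)
        calc (q*(2*m-3))*(q*(2*m-3)) = (9+6*s)*(2*m-3)^2 := by
              linear_combination ((2*m-3)^2) * hq
        _ ≤ (9+6*s)*b := step
        _ < a^2 := H1
        _ = m^2*m^2 := by rw [hm2]; ring
      linarith
    · have hfac : 0 ≤ (2-m-r)*(2+r) := by
        apply mul_nonneg <;> linarith
      have hqf := mul_nonneg hq0.le hfac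
      linarith [hqf, hbr]
  have hid : (m - M)*(m - (2*q - M)) = m^2 - 2*q*m + 3*q := by linear_combination -key1
  have hneg : m - (2*q - M) < 0 := by linarith
  have hfin : m - M < 0 := by
    by_contra hc
    push_neg at hc
    have h0 := mul_nonpos_of_nonneg_of_nonpos hc hneg.le
    rw [hid] at h0
    linarith
  linarith

lemma key_normed (u : ℝ) (c : ℂ) (hu0 : 0 ≤ u) (hu2 : u ≤ 2) (hc0 : c ≠ 0)
    (hcle : ‖c‖ ≤ 1)
    (h3 : Real.sqrt (9+6*Real.sqrt 3) < ‖(((u:ℂ)+c)^2)/(1+(u:ℂ)*c)‖)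
    (h2 : Real.sqrt (9+6*Real.sqrt 3) < ‖((1+(u:ℂ)*c)^2)/(((u:ℂ)+c)*c)‖) :
    False := by
  have hs : (Real.sqrt 3)^2 = 3 := Real.sq_sqrt (by norm_num)
  have hs0 : 0 < Real.sqrt 3 := Real.sqrt_pos.2 (by norm_num)
  have hq : (Real.sqrt (9+6*Real.sqrt 3))^2 = 9+6*Real.sqrt 3 := Real.sq_sqrt (by positivity)
  have hq0 : 0 < Real.sqrt (9+6*Real.sqrt 3) := Real.sqrt_pos.2 (by positivity)
  set s := Real.sqrt 3
  set q := Real.sqrt (9+6*s)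
  set r := ‖c‖ with hrdef
  set A := ‖(u:ℂ)+c‖ with hAdef
  set B := ‖1+(u:ℂ)*c‖ with hBdef
  have hr0 : 0 < r := norm_pos_iff.2 hc0
  have hBnn : 0 ≤ B := norm_nonneg _
  have hAnn : 0 ≤ A := norm_nonneg _
  have habs3 : ‖(((u:ℂ)+c)^2)/(1+(u:ℂ)*c)‖ = A^2/B := by
    rw [norm_div, norm_pow]
  have habs2 : ‖((1+(u:ℂ)*c)^2)/(((u:ℂ)+c)*c)‖ = B^2/(A*r) := by
    rw [norm_div, norm_pow, norm_mul]
  rw [habs3] at h3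
  rw [habs2] at h2
  have hB0 : 0 < B := by
    rcases eq_or_lt_of_le hBnn with h | h
    · rw [← h, div_zero] at h3; linarith
    · exact h
  have hA0 : 0 < A := by
    rcases eq_or_lt_of_le hAnn with h | h
    · rw [← h, zero_mul, div_zero] at h2; linarith
    · exact h
  have h3' : q*B < A^2 := (lt_div_iff₀ hB0).1 h3
  have h2' : q*(A*r) < B^2 := (lt_div_iff₀ (mul_pos hA0 hr0)).1 h2
  have hr2 : r^2 = c.re^2 + c.im^2 := by
    rw [hrdef, Complex.sq_norm, Complex.normSq_apply]; ring
  have hA2 : A^2 = u^2 + r^2 + 2*u*c.re := by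
    rw [hAdef, Complex.sq_norm, Complex.normSq_apply]
    simp only [Complex.add_re, Complex.ofReal_re, Complex.add_im, Complex.ofReal_im, zero_add]
    linarith [hr2]
  have hB2 : B^2 = 1 + u^2*r^2 + 2*u*c.re := by
    rw [hBdef, Complex.sq_norm, Complex.normSq_apply]
    simp only [Complex.add_re, Complex.add_im, Complex.one_re, Complex.one_im,
      Complex.mul_re, Complex.mul_im, Complex.ofReal_re, Complex.ofReal_im, zero_add, zero_mul,
      mul_zero, sub_zero, add_zero]
    nlinarith [hr2]
  have hxr := Complex.abs_re_le_norm c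
  rw [← hrdef] at hxr
  have hxr' := abs_le.1 hxr
  have H1 : (9+6*s)*(B^2) < (A^2)^2 := by
    have h := mul_self_lt_mul_self (by positivity) h3'
    have heq : (q*B)*(q*B) = (9+6*s)*B^2 := by linear_combination (B^2)*hq
    linarith [h, heq]
  have H2 : (9+6*s)*(A^2)*r^2 < (B^2)^2 := by
    have h := mul_self_lt_mul_self (by positivity) h2'
    have heq : (q*(A*r))*(q*(A*r)) = (9+6*s)*(A^2)*r^2 := by linear_combination (A^2*r^2)*hq
    linarith [h, heq]
  exact key_real s q u r c.re (A^2) (B^2) hs hs0 hq hq0 hu0 hu2 hr0 hcle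
    hxr'.1 hxr'.2 hA2 hB2 (by positivity) (sq_nonneg B) H1 H2

lemma key_abs (u : ℝ) (c : ℂ) (hu0 : 0 ≤ u) (hu2 : u ≤ 2) (hc0 : c ≠ 0)
    (h3 : Real.sqrt (9+6*Real.sqrt 3) < ‖(((u:ℂ)+c)^2)/(1+(u:ℂ)*c)‖)
    (h2 : Real.sqrt (9+6*Real.sqrt 3) < ‖((1+(u:ℂ)*c)^2)/(((u:ℂ)+c)*c)‖) :
    False := by
  have hq0 : 0 ≤ Real.sqrt (9+6*Real.sqrt 3) := Real.sqrt_nonneg _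
  have hd2 : (u:ℂ)+c ≠ 0 := by
    intro h; rw [h] at h2; simp at h2; linarith
  have hd1 : 1+(u:ℂ)*c ≠ 0 := by
    intro h; rw [h] at h3; simp at h3; linarith
  rcases le_or_gt (‖c‖) 1 with hle | hgt
  · exact key_normed u c hu0 hu2 hc0 hle h3 h2
  · have hc0' : c⁻¹ ≠ 0 := inv_ne_zero hc0
    have hle' : ‖c⁻¹‖ ≤ 1 := by
      rw [norm_inv]
      exact inv_le_one_of_one_le₀ hgt.le
    have e3 : (((u:ℂ)+c⁻¹)^2)/(1+(u:ℂ)*c⁻¹) = ((1+(u:ℂ)*c)^2)/(((u:ℂ)+c)*c) := by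
      rw [div_eq_div_iff]
      · field_simp
        ring
      · intro h
        apply hd2
        have : (1:ℂ) + u*c⁻¹ = (c + u)/c := by field_simp
        rw [this, div_eq_zero_iff] at h
        rcases h with h | h
        · rw [← h]; ring
        · exact absurd h hc0
      · exact mul_ne_zero hd2 hc0
    have e2 : ((1+(u:ℂ)*c⁻¹)^2)/(((u:ℂ)+c⁻¹)*c⁻¹) = (((u:ℂ)+c)^2)/(1+(u:ℂ)*c) := by
      rw [div_eq_div_iff]
      · field_simp
        ring
      · apply mul_ne_zero _ hc0'
        intro h
        apply hd1
        have : (u:ℂ) + c⁻¹ = (u*c + 1)/c := by field_simp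
        rw [this, div_eq_zero_iff] at h
        rcases h with h | h
        · rw [← h]; ring
        · exact absurd h hc0
      · exact hd1
    exact key_normed u c⁻¹ hu0 hu2 hc0' hle' (by rw [e3]; exact h2) (by rw [e2]; exact h3)

lemma three_roots (r1 r2 r3 e1 e2 e3 : ℂ)
    (h1 : e1 = r1+r2+r3) (h2 : e2 = r1*r2+r1*r3+r2*r3) (h3 : e3 = r1*r2*r3)
    (he1 : e1 ≠ 0) (he2 : e2 ≠ 0) (he3 : e3 ≠ 0)
    (habs : ‖r1‖ = ‖r2‖)
    (Hq3 : Real.sqrt (9+6*Real.sqrt 3) < ‖e1^2/e2‖)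
    (Hq2 : Real.sqrt (9+6*Real.sqrt 3) < ‖e2^2/(e1*e3)‖) : False := by
  have hr1 : r1 ≠ 0 := by intro h; apply he3; rw [h3, h]; ring
  have hr2 : r2 ≠ 0 := by intro h; apply he3; rw [h3, h]; ring
  have hr3 : r3 ≠ 0 := by intro h; apply he3; rw [h3, h]; ring
  obtain ⟨μ, hμ⟩ : ∃ μ:ℂ, μ^2 = r1*r2 := by
    refine ⟨Complex.exp (Complex.log (r1*r2)/2), ?_⟩
    rw [sq, ← Complex.exp_add, add_halves]
    exact Complex.exp_log (mul_ne_zero hr1 hr2)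
  have hμ0 : μ ≠ 0 := by
    intro h; rw [h] at hμ
    exact mul_ne_zero hr1 hr2 (by rw [← hμ]; ring)
  set z := r1/μ with hzdef
  set w := r2/μ with hwdef
  set c := r3/μ with hcdef
  have hc0 : c ≠ 0 := div_ne_zero hr3 hμ0
  have hzw : z*w = 1 := by
    rw [hzdef, hwdef]
    field_simp
    linear_combination -hμ
  have habsμ : ‖μ‖ = ‖r1‖ := by
    have hh : (‖μ‖)^2 = ‖r1‖ * ‖r1‖ := by
      rw [← norm_pow, hμ, norm_mul, habs]
    nlinarith [norm_nonneg μ, norm_nonneg r1]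
  have habsz : ‖z‖ = 1 := by
    rw [hzdef, norm_div, habsμ, div_self]
    exact norm_ne_zero_iff.2 hr1
  have hz0 : z ≠ 0 := by
    intro h; rw [h] at habsz; simp at habsz
  have hwz : w = (starRingEnd ℂ) z := by
    have hnz : Complex.normSq z = 1 := by
      rw [← Complex.sq_norm, habsz]; norm_num
    have hzc : z * (starRingEnd ℂ) z = 1 := by
      rw [Complex.mul_conj, hnz]; norm_num
    exact mul_left_cancel₀ hz0 (hzw.trans hzc.symm)
  set u0 := (z+w).re with hu0def
  have him : (z+w).im = 0 := by rw [hwz]; simp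
  have hzwu : z + w = (u0:ℂ) := by
    apply Complex.ext
    · simp [hu0def]
    · simp [him]
  have hu02 : |u0| ≤ 2 := by
    have ha1 : |(z+w).re| ≤ ‖z+w‖ := Complex.abs_re_le_norm _
    have ha2 : ‖z+w‖ ≤ ‖z‖ + ‖w‖ :=
      norm_add_le _ _
    have ha3 : ‖w‖ = 1 := by rw [hwz, Complex.norm_conj, habsz]
    rw [habsz, ha3] at ha2
    calc |u0| = |(z+w).re| := rfl
    _ ≤ ‖z+w‖ := ha1
    _ ≤ 2 := by linarith
  have hE1 : e1 = μ*((u0:ℂ) + c) := by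
    rw [h1, ← hzwu, hzdef, hwdef, hcdef]
    field_simp
  have hE2 : e2 = μ^2*(1 + (u0:ℂ)*c) := by
    rw [h2, ← hzwu, hzdef, hwdef, hcdef]
    field_simp
    linear_combination (-1) * hμ
  have hE3 : e3 = μ^3*c := by
    rw [h3, hcdef]
    field_simp
    linear_combination (-1) * hμ
  have hd1 : (1 + (u0:ℂ)*c) ≠ 0 := by
    intro h; apply he2; rw [hE2, h, mul_zero]
  have hd2 : ((u0:ℂ) + c) ≠ 0 := by
    intro h; apply he1; rw [hE1, h, mul_zero]
  have hEq3 : e1^2/e2 = ((u0:ℂ)+c)^2/(1+(u0:ℂ)*c) := by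
    rw [hE1, hE2]
    field_simp
  have hEq2 : e2^2/(e1*e3) = (1+(u0:ℂ)*c)^2/(((u0:ℂ)+c)*c) := by
    rw [hE1, hE2, hE3]
    field_simp
  rw [hEq3] at Hq3
  rw [hEq2] at Hq2
  rcases le_or_gt 0 u0 with hpos | hneg
  · exact key_abs u0 c hpos (by linarith [le_abs_self u0]) hc0 Hq3 Hq2
  · apply key_abs (-u0) (-c) (by linarith) (by linarith [neg_abs_le u0]) (neg_ne_zero.2 hc0)
    · rw [show (((-u0 : ℝ)):ℂ) = -(u0:ℂ) by push_cast; ring,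
        show ((-(u0:ℂ))+(-c))^2/(1+(-(u0:ℂ))*(-c)) = ((u0:ℂ)+c)^2/(1+(u0:ℂ)*c) by ring]
      exact Hq3
    · rw [show (((-u0 : ℝ)):ℂ) = -(u0:ℂ) by push_cast; ring,
        show (1+(-(u0:ℂ))*(-c))^2/(((-(u0:ℂ))+(-c))*(-c)) = (1+(u0:ℂ)*c)^2/(((u0:ℂ)+c)*c) by ring]
      exact Hq2

/-- If `P` is a complex polynomial of degree `3` with nonzero coefficients and
`|q_2(P)| > √(9+6√3)`, `|q_3(P)| > √(9+6√3)`, then all zeros of `P` are simple and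
the moduli of the zeros are pairwise different. -/
theorem stmt_10 (P : Polynomial ℂ) (hdeg : P.natDegree = 3)
    (hcoeff : ∀ k, k ≤ 3 → P.coeff k ≠ 0)
    (hq2 : Real.sqrt (9 + 6 * Real.sqrt 3) <
      ‖(P.coeff 1) ^ 2 / (P.coeff 0 * P.coeff 2)‖)
    (hq3 : Real.sqrt (9 + 6 * Real.sqrt 3) <
      ‖(P.coeff 2) ^ 2 / (P.coeff 1 * P.coeff 3)‖) :
    (∀ z : ℂ, P.IsRoot z → P.rootMultiplicity z = 1) ∧
    (∀ z w : ℂ, P.IsRoot z → P.IsRoot w → z ≠ w →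
      ‖z‖ ≠ ‖w‖) := by
  have hL : P.coeff 3 ≠ 0 := hcoeff 3 le_rfl
  have hP0 : P ≠ 0 := fun h => hL (by simp [h])
  have hlc : P.leadingCoeff = P.coeff 3 := by rw [Polynomial.leadingCoeff, hdeg]
  have hsplits : P.Splits := IsAlgClosed.splits P
  have hcard : P.roots.card = 3 := by
    rw [Polynomial.splits_iff_card_roots] at hsplits
    rw [hsplits, hdeg]
  obtain ⟨r1, r2, r3, hr⟩ := Multiset.card_eq_three.mp hcard
  have hprod : P = Polynomial.C (P.coeff 3) *
      ((Polynomial.X - Polynomial.C r1) * ((Polynomial.X - Polynomial.C r2) *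
        (Polynomial.X - Polynomial.C r3))) := by
    have h := (IsAlgClosed.splits P).eq_prod_roots
    rw [hr, hlc] at h
    simpa [Multiset.map_cons, Multiset.prod_cons, Multiset.map_singleton,
      Multiset.prod_singleton, mul_assoc] using h
  have hexp : (Polynomial.X - Polynomial.C r1) * ((Polynomial.X - Polynomial.C r2) *
      (Polynomial.X - Polynomial.C r3)) =
      Polynomial.X^3 - Polynomial.C (r1+r2+r3) * Polynomial.X^2
        + Polynomial.C (r1*r2+r1*r3+r2*r3) * Polynomial.X - Polynomial.C (r1*r2*r3) := by
    simp only [Polynomial.C_add, Polynomial.C_mul]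
    ring
  rw [hexp] at hprod
  have c0 : P.coeff 0 = -(P.coeff 3 * (r1*r2*r3)) := by
    conv_lhs => rw [hprod]
    simp only [Polynomial.coeff_C_mul, Polynomial.coeff_sub, Polynomial.coeff_add,
      Polynomial.coeff_X_pow, Polynomial.coeff_C, Polynomial.coeff_X]
    norm_num
  have c1 : P.coeff 1 = P.coeff 3 * (r1*r2+r1*r3+r2*r3) := by
    conv_lhs => rw [hprod]
    simp only [Polynomial.coeff_C_mul, Polynomial.coeff_sub, Polynomial.coeff_add,
      Polynomial.coeff_X_pow, Polynomial.coeff_C, Polynomial.coeff_X]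
    norm_num
  have c2 : P.coeff 2 = -(P.coeff 3 * (r1+r2+r3)) := by
    conv_lhs => rw [hprod]
    simp only [Polynomial.coeff_C_mul, Polynomial.coeff_sub, Polynomial.coeff_add,
      Polynomial.coeff_X_pow, Polynomial.coeff_C, Polynomial.coeff_X]
    norm_num
    ring
  have hE3 : r1*r2*r3 ≠ 0 := by
    intro h
    exact hcoeff 0 (by norm_num) (by rw [c0, h, mul_zero, neg_zero])
  have hE2 : r1*r2+r1*r3+r2*r3 ≠ 0 := by
    intro h
    exact hcoeff 1 (by norm_num) (by rw [c1, h, mul_zero])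
  have hE1 : r1+r2+r3 ≠ 0 := by
    intro h
    exact hcoeff 2 (by norm_num) (by rw [c2, h, mul_zero, neg_zero])
  have hq3' : Real.sqrt (9+6*Real.sqrt 3) <
      ‖(r1+r2+r3)^2/(r1*r2+r1*r3+r2*r3)‖ := by
    have he : (P.coeff 2)^2/(P.coeff 1 * P.coeff 3) = (r1+r2+r3)^2/(r1*r2+r1*r3+r2*r3) := by
      rw [c2, c1]
      field_simp
    rwa [he] at hq3
  have hq2' : Real.sqrt (9+6*Real.sqrt 3) <
      ‖(r1*r2+r1*r3+r2*r3)^2/((r1+r2+r3)*(r1*r2*r3))‖ := by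
    have he : (P.coeff 1)^2/(P.coeff 0 * P.coeff 2) =
        (r1*r2+r1*r3+r2*r3)^2/((r1+r2+r3)*(r1*r2*r3)) := by
      rw [c0, c1, c2]
      field_simp
    rwa [he] at hq2
  -- helper: no two roots (as listed) can have equal modulus
  have main12 : ‖r1‖ ≠ ‖r2‖ := fun h =>
    three_roots r1 r2 r3 _ _ _ rfl rfl rfl hE1 hE2 hE3 h hq3' hq2'
  have main13 : ‖r1‖ ≠ ‖r3‖ := fun h =>
    three_roots r1 r3 r2 (r1+r2+r3) (r1*r2+r1*r3+r2*r3) (r1*r2*r3)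
      (by ring) (by ring) (by ring) hE1 hE2 hE3 h hq3' hq2'
  have main23 : ‖r2‖ ≠ ‖r3‖ := fun h =>
    three_roots r2 r3 r1 (r1+r2+r3) (r1*r2+r1*r3+r2*r3) (r1*r2*r3)
      (by ring) (by ring) (by ring) hE1 hE2 hE3 h hq3' hq2'
  have hne12 : r1 ≠ r2 := fun h => main12 (by rw [h])
  have hne13 : r1 ≠ r3 := fun h => main13 (by rw [h])
  have hne23 : r2 ≠ r3 := fun h => main23 (by rw [h])
  constructor
  · intro z hz
    have hzmem : z ∈ P.roots := by
      rw [Polynomial.mem_roots hP0]; exact hz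
    have h1le : 1 ≤ P.roots.count z := Multiset.one_le_count_iff_mem.2 hzmem
    rw [← Polynomial.count_roots]
    have hnodup : P.roots.Nodup := by
      rw [hr]
      refine Multiset.nodup_cons.2 ⟨?_, Multiset.nodup_cons.2 ⟨?_, Multiset.nodup_singleton _⟩⟩
      · intro h
        rcases Multiset.mem_cons.1 h with h | h
        · exact hne12 h
        · exact hne13 (Multiset.mem_singleton.1 h)
      · intro h
        exact hne23 (Multiset.mem_singleton.1 h)
    have hle1 : P.roots.count z ≤ 1 := Multiset.nodup_iff_count_le_one.1 hnodup z
    omega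
  · intro z w hz hw hzw heq
    have hzmem : z ∈ P.roots := by rw [Polynomial.mem_roots hP0]; exact hz
    have hwmem : w ∈ P.roots := by rw [Polynomial.mem_roots hP0]; exact hw
    rw [hr] at hzmem hwmem
    have hzc : z = r1 ∨ z = r2 ∨ z = r3 := by
      rcases Multiset.mem_cons.1 hzmem with h | h
      · exact Or.inl h
      rcases Multiset.mem_cons.1 h with h | h
      · exact Or.inr (Or.inl h)
      · exact Or.inr (Or.inr (Multiset.mem_singleton.1 h))
    have hwc : w = r1 ∨ w = r2 ∨ w = r3 := by
      rcases Multiset.mem_cons.1 hwmem with h | h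
      · exact Or.inl h
      rcases Multiset.mem_cons.1 h with h | h
      · exact Or.inr (Or.inl h)
      · exact Or.inr (Or.inr (Multiset.mem_singleton.1 h))
    rcases hzc with hz1 | hz1 | hz1 <;> rcases hwc with hw1 | hw1 | hw1 <;>
      subst hz1 <;> subst hw1 <;>
      first
        | exact hzw rfl
        | exact main12 heq
        | exact main13 heq
        | exact main23 heq
        | exact main12 heq.symm
        | exact main13 heq.symm
        | exact main23 heq.symm
end

section
/- There exists a complex polynomial Q of degree 3 with all coefficients nonzero such that |q_2(Q)| = |q_3(Q)| = √(9 + 6√3) and Q has a multiple root. In particular, the polynomial Q(z) = 1 + z + z²/√(9+6√3) − z³/(9+6√3)^{3/2} has these properties. -/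
open Polynomial

/-- The explicit cubic `Q(z) = 1 + z + z²/√(9+6√3) − z³/(9+6√3)^{3/2}`. -/
noncomputable def Q₀ : Polynomial ℂ :=
  C 1 + C 1 * X + C ((Real.sqrt (9 + 6 * Real.sqrt 3) : ℂ)⁻¹) * X ^ 2 +
    C (-(((Real.sqrt (9 + 6 * Real.sqrt 3) : ℂ)) ^ 3)⁻¹) * X ^ 3

lemma stmt_11_real {r u s : ℝ} (hr : r ^ 2 = 3) (hr0 : 0 < r) (hu : u ^ 2 = 2 * r)
    (hu0 : 0 < u) (hs2 : s ^ 2 = 9 + 6 * r) (hs0 : 0 < s) :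
    ∃ a : ℝ, (1 + s * a + s * a ^ 2 - a ^ 3 = 0 ∧ s + 2 * s * a - 3 * a ^ 2 = 0) := by
  have hr2 : r < 2 := by nlinarith
  have hr32 : 3/2 < r := by nlinarith
  set a := (u - 1 - r) / 2 with hadef
  have hA : a ^ 4 + 2 * a ^ 3 + 2 * a + 1 = 0 := by
    simp only [hadef]
    linear_combination (-(3:ℝ)/8 + r/8 + 3*r^2/8 - u*r/4 + u^2/16) * hu +
      (1/16 + 3*r/4 + r^2/16 - u/2 - u*r/4) * hr
  have hB : (2 * a ^ 3 + 1) ^ 2 = (9 + 6 * r) * a ^ 4 := by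
    simp only [hadef]
    linear_combination (-(63:ℝ)/16 - 6*r + r^2 + 27*r^3/8 + 15*r^4/16 + 3*u/2 - 3*u*r/4
        - 3*u*r^2 - 5*u*r^3/4 + 3*u^2/8 + 13*u^2*r/8 + 15*u^2*r^2/16 - 3*u^3/8
        - 3*u^3*r/8 + u^4/16) * hu +
      (31*r/8 + 93*r^2/16 + 15*r^3/8 + r^4/16 - 9*u/8 - 33*u*r/8 - 23*u*r^2/8
        - 3*u*r^3/8) * hr
  have ha0 : a ≠ 0 := by
    intro h; rw [h] at hA; norm_num at hA
  have hru : r < u := by nlinarith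
  have ha1 : -(1/2) < a := by rw [hadef]; linarith
  have ha2 : a < 0 := by
    have : u < 1 + r := by nlinarith
    rw [hadef]; linarith
  have hpos : 0 < 2 * a ^ 3 + 1 := by nlinarith
  have hsa : s * a ^ 2 = 2 * a ^ 3 + 1 := by
    have h1 : (s * a ^ 2) ^ 2 = (2 * a ^ 3 + 1) ^ 2 := by
      rw [mul_pow, hs2]; linear_combination -hB
    have h2 : 0 ≤ s * a ^ 2 := by positivity
    have h3 := (sq_eq_sq_iff_abs_eq_abs _ _).mp h1
    rwa [abs_of_nonneg h2, abs_of_pos hpos] at h3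
  refine ⟨a, ?_, ?_⟩
  · have h4 : a ^ 2 * (1 + s * a + s * a ^ 2 - a ^ 3) = 0 := by
      linear_combination (a + a ^ 2) * hsa + a * hA
    exact (mul_eq_zero.mp h4).resolve_left (pow_ne_zero 2 ha0)
  · have h4 : a ^ 2 * (s + 2 * s * a - 3 * a ^ 2) = 0 := by
      linear_combination (1 + 2 * a) * hsa + hA
    exact (mul_eq_zero.mp h4).resolve_left (pow_ne_zero 2 ha0)

lemma stmt_11_aux :
    (Q₀.natDegree = 3 ∧
      (∀ k, k ≤ 3 → Q₀.coeff k ≠ 0) ∧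
      ‖(Q₀.coeff 1) ^ 2 / (Q₀.coeff 0 * Q₀.coeff 2)‖ =
        Real.sqrt (9 + 6 * Real.sqrt 3) ∧
      ‖(Q₀.coeff 2) ^ 2 / (Q₀.coeff 1 * Q₀.coeff 3)‖ =
        Real.sqrt (9 + 6 * Real.sqrt 3) ∧
      (∃ z : ℂ, 2 ≤ Q₀.rootMultiplicity z)) := by
  have hr : (Real.sqrt 3) ^ 2 = 3 := Real.sq_sqrt (by norm_num)
  have hr0 : 0 < Real.sqrt 3 := Real.sqrt_pos.mpr (by norm_num)
  have hu : (Real.sqrt (2 * Real.sqrt 3)) ^ 2 = 2 * Real.sqrt 3 :=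
    Real.sq_sqrt (by positivity)
  have hu0 : 0 < Real.sqrt (2 * Real.sqrt 3) := Real.sqrt_pos.mpr (by positivity)
  have hs2 : (Real.sqrt (9 + 6 * Real.sqrt 3)) ^ 2 = 9 + 6 * Real.sqrt 3 :=
    Real.sq_sqrt (by positivity)
  have hs0 : 0 < Real.sqrt (9 + 6 * Real.sqrt 3) := Real.sqrt_pos.mpr (by positivity)
  set s := Real.sqrt (9 + 6 * Real.sqrt 3) with hsdef
  have hsne : s ≠ 0 := hs0.ne'
  have hsC : ((s : ℂ)) ≠ 0 := by exact_mod_cast hsne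
  -- coefficients
  have hc0 : Q₀.coeff 0 = 1 := by
    simp [Q₀, coeff_add, coeff_C_mul, coeff_X_pow, coeff_one, coeff_X]
  have hc1 : Q₀.coeff 1 = 1 := by
    simp [Q₀, coeff_add, coeff_C_mul, coeff_X_pow, coeff_one, coeff_X]
  have hc2 : Q₀.coeff 2 = ((s : ℂ))⁻¹ := by
    simp [Q₀, coeff_add, coeff_C_mul, coeff_X_pow, coeff_one, coeff_X]
    rw [hsdef]
  have hc3 : Q₀.coeff 3 = -(((s : ℂ)) ^ 3)⁻¹ := by
    simp [Q₀, coeff_add, coeff_C_mul, coeff_X_pow, coeff_one, coeff_X]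
    rw [hsdef]
  have hQne : Q₀ ≠ 0 := fun h => by simp [h] at hc0
  -- degree
  have hdeg : Q₀.natDegree = 3 := by
    unfold Q₀
    compute_degree!

  -- real algebra
  obtain ⟨a, hT1, hT2⟩ := stmt_11_real hr hr0 hu hu0 hs2 hs0
  set z : ℂ := ((s * a : ℝ) : ℂ) with hzdef
  have hroot : Q₀.IsRoot z := by
    have e1 : s⁻¹ * (s * a) ^ 2 = s * a ^ 2 := by field_simp
    have e2 : (s ^ 3)⁻¹ * (s * a) ^ 3 = a ^ 3 := by field_simp
    have hreal : 1 + s * a + s⁻¹ * (s * a) ^ 2 - (s ^ 3)⁻¹ * (s * a) ^ 3 = 0 := by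
      rw [e1, e2]; exact hT1
    have key : Q₀.eval z = ((1 + s * a + s⁻¹ * (s * a) ^ 2 - (s ^ 3)⁻¹ * (s * a) ^ 3 : ℝ) : ℂ) := by
      simp only [Q₀, eval_add, eval_mul, eval_pow, eval_C, eval_X, hzdef, ← hsdef]
      push_cast
      ring
    show Q₀.eval z = 0
    rw [key, hreal, Complex.ofReal_zero]
  have hroot' : Q₀.derivative.IsRoot z := by
    have e3 : s⁻¹ * (s * a) = a := by field_simp
    have e4 : (s ^ 3)⁻¹ * (s * a) ^ 2 = a ^ 2 / s := by field_simp
    have hreal : 1 + 2 * s⁻¹ * (s * a) - 3 * (s ^ 3)⁻¹ * (s * a) ^ 2 = 0 := by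
      rw [mul_assoc, e3, mul_assoc 3, e4]
      field_simp
      linarith [hT2]
    have key : Q₀.derivative.eval z =
        ((1 + 2 * s⁻¹ * (s * a) - 3 * (s ^ 3)⁻¹ * (s * a) ^ 2 : ℝ) : ℂ) := by
      simp only [Q₀, ← hsdef, derivative_add, derivative_mul, derivative_C, derivative_X,
        derivative_X_pow, derivative_one, eval_add, eval_mul, eval_pow, eval_C, eval_X,
        eval_zero, eval_one, eval_natCast, zero_mul, mul_zero, zero_add, add_zero, mul_one,
        hzdef]
      push_cast
      ring
    show Q₀.derivative.eval z = 0
    rw [key, hreal, Complex.ofReal_zero]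
  refine ⟨hdeg, ?_, ?_, ?_, ⟨z, ?_⟩⟩
  · intro k hk
    interval_cases k <;> simp [hc0, hc1, hc2, hc3, hsC]
  · rw [hc0, hc1, hc2]
    have h : (1 : ℂ) ^ 2 / (1 * ((s : ℂ))⁻¹) = (s : ℂ) := by field_simp
    rw [h, Complex.norm_real, Real.norm_of_nonneg hs0.le]
  · rw [hc1, hc2, hc3]
    have h : ((s : ℂ))⁻¹ ^ 2 / (1 * -(((s : ℂ)) ^ 3)⁻¹) = -(s : ℂ) := by
      field_simp
    rw [h, norm_neg, Complex.norm_real, Real.norm_of_nonneg hs0.le]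
  · exact (Polynomial.one_lt_rootMultiplicity_iff_isRoot hQne).mpr ⟨hroot, hroot'⟩

/-- There is a complex cubic with nonzero coefficients such that
`|q_2(Q)| = |q_3(Q)| = √(9+6√3)` and `Q` has a multiple root; in particular the
explicit polynomial `Q₀` above has these properties. -/
theorem stmt_11 :
    (Q₀.natDegree = 3 ∧
      (∀ k, k ≤ 3 → Q₀.coeff k ≠ 0) ∧
      ‖(Q₀.coeff 1) ^ 2 / (Q₀.coeff 0 * Q₀.coeff 2)‖ =
        Real.sqrt (9 + 6 * Real.sqrt 3) ∧
      ‖(Q₀.coeff 2) ^ 2 / (Q₀.coeff 1 * Q₀.coeff 3)‖ =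
        Real.sqrt (9 + 6 * Real.sqrt 3) ∧
      (∃ z : ℂ, 2 ≤ Q₀.rootMultiplicity z)) ∧
    (∃ Q : Polynomial ℂ, Q.natDegree = 3 ∧
      (∀ k, k ≤ 3 → Q.coeff k ≠ 0) ∧
      ‖(Q.coeff 1) ^ 2 / (Q.coeff 0 * Q.coeff 2)‖ =
        Real.sqrt (9 + 6 * Real.sqrt 3) ∧
      ‖(Q.coeff 2) ^ 2 / (Q.coeff 1 * Q.coeff 3)‖ =
        Real.sqrt (9 + 6 * Real.sqrt 3) ∧
      (∃ z : ℂ, 2 ≤ Q.rootMultiplicity z)) := by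
  exact ⟨stmt_11_aux, ⟨Q₀, stmt_11_aux⟩⟩
end

section
/- For every positive integer n and every ε > 0 there exists a polynomial P of degree 2n with all coefficients real and nonzero, such that |q_k(P)| > b_{2n} - ε for all k = 2, 3, …, 2n, and P has a nonreal root. -/
open Polynomial Finset

lemma laguerre_aux : ∀ (N : ℕ) (P : Polynomial ℝ), P.natDegree ≤ N →
    (∀ z : ℂ, (P.map (algebraMap ℝ ℂ)).IsRoot z → z.im = 0) →
    ∀ x : ℝ, P.eval x * (derivative (derivative P)).eval x ≤ (derivative P).eval x ^ 2 := by
  intro N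
  induction N with
  | zero =>
      intro P hP _ x
      rw [Polynomial.eq_C_of_natDegree_eq_zero (Nat.le_zero.mp hP)]
      simp
  | succ N ih =>
      intro P hP hroots x
      by_cases h0 : P.natDegree = 0
      · rw [Polynomial.eq_C_of_natDegree_eq_zero h0]; simp
      · have hP0 : P ≠ 0 := fun h => h0 (by simp [h])
        have hmapdeg : (P.map (algebraMap ℝ ℂ)).natDegree = P.natDegree :=
          Polynomial.natDegree_map_eq_of_injective (algebraMap ℝ ℂ).injective P
        have hdegpos : 0 < (P.map (algebraMap ℝ ℂ)).degree := by
          rw [Polynomial.degree_eq_natDegree (by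
            intro h
            rw [h] at hmapdeg
            simp at hmapdeg
            exact h0 hmapdeg.symm)]
          exact_mod_cast Nat.pos_of_ne_zero (by rw [hmapdeg]; exact h0)
        obtain ⟨z, hz⟩ := Complex.exists_root hdegpos
        have him := hroots z hz
        have hzr : z = ((z.re : ℝ) : ℂ) := Complex.ext rfl (by simp [him])
        have hroot : P.IsRoot z.re := by
          have h2 : (P.map (algebraMap ℝ ℂ)).eval ((algebraMap ℝ ℂ) z.re) = 0 := by
            have := hz.eq_zero
            rw [hzr] at this
            simpa [Complex.coe_algebraMap] using this
          rw [Polynomial.eval_map, Polynomial.eval₂_at_apply] at h2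
          have := (map_eq_zero_iff (algebraMap ℝ ℂ) (algebraMap ℝ ℂ).injective).mp h2
          exact this
        obtain ⟨Q, hQ⟩ := Polynomial.dvd_iff_isRoot.mpr hroot
        have hQ0 : Q ≠ 0 := by rintro rfl; rw [mul_zero] at hQ; exact hP0 hQ
        have hdQ : Q.natDegree ≤ N := by
          have := Polynomial.natDegree_mul (Polynomial.X_sub_C_ne_zero z.re) hQ0
          rw [← hQ, Polynomial.natDegree_X_sub_C] at this
          omega
        have hQroots : ∀ w : ℂ, (Q.map (algebraMap ℝ ℂ)).IsRoot w → w.im = 0 := by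
          intro w hw
          apply hroots w
          rw [hQ, Polynomial.map_mul]
          simp [Polynomial.IsRoot, hw.eq_zero]
        have key := ih Q hdQ hQroots x
        rw [hQ]
        simp only [Polynomial.derivative_mul, Polynomial.derivative_X_sub_C,
          Polynomial.derivative_add, Polynomial.eval_add, Polynomial.eval_mul,
          Polynomial.eval_sub, Polynomial.eval_X,
          Polynomial.eval_C, Polynomial.eval_one, one_mul]
        nlinarith [sq_nonneg (x - z.re), sq_nonneg (Q.eval x), sq_nonneg ((x - z.re) * (derivative Q).eval x), mul_le_mul_of_nonneg_left key (sq_nonneg (x - z.re))]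

lemma pair_sum (n : ℕ) (f : ℕ → ℝ) :
    ∑ k ∈ range (2 * n + 1), f k
      = f n + ∑ j ∈ range n, (f (n + 1 + j) + f (n - 1 - j)) := by
  have h1 : ∑ k ∈ range (2 * n + 1), f k
      = ∑ k ∈ range n, f k + ∑ k ∈ Ico n (2 * n + 1), f k := by
    rw [range_eq_Ico, ← Finset.sum_Ico_consecutive f (by omega : 0 ≤ n) (by omega : n ≤ 2 * n + 1),
      ← range_eq_Ico]
  have h2 : ∑ k ∈ Ico n (2 * n + 1), f k = f n + ∑ k ∈ Ico (n + 1) (2 * n + 1), f k :=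
    Finset.sum_eq_sum_Ico_succ_bot (by omega) f
  have h3 : ∑ k ∈ Ico (n + 1) (2 * n + 1), f k = ∑ j ∈ range n, f (n + 1 + j) := by
    rw [Finset.sum_Ico_eq_sum_range, show 2 * n + 1 - (n + 1) = n from by omega]
  have h4 : ∑ k ∈ range n, f k = ∑ j ∈ range n, f (n - 1 - j) :=
    (Finset.sum_range_reflect f n).symm
  rw [h1, h2, h3, h4, Finset.sum_add_distrib]
  ring

lemma icc_range (n : ℕ) (g : ℕ → ℝ) :
    ∑ j ∈ Icc 1 n, g j = ∑ j ∈ range n, g (j + 1) := by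
  rw [← Finset.Ico_add_one_right_eq_Icc, Finset.sum_Ico_eq_sum_range,
    show n + 1 - 1 = n from by omega]
  exact Finset.sum_congr rfl (fun i _ => by rw [Nat.add_comm])

lemma main_sum (n : ℕ) (u v : ℝ) (g : ℕ → ℝ) (w : ℕ → ℝ)
    (hg : ∀ j, j < n → g (n + 1 + j) + g (n - 1 - j) = w (j + 1)) :
    ∑ k ∈ range (2 * n + 1), (if k = n then u else v) * g k
      = u * g n + v * ∑ j ∈ Icc 1 n, w j := by
  rw [pair_sum]
  rw [icc_range]
  congr 1
  · simp
  · rw [Finset.mul_sum]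
    apply Finset.sum_congr rfl
    intro j hj
    have hj' := Finset.mem_range.mp hj
    rw [if_neg (by omega), if_neg (by omega), ← mul_add, hg j hj']
open Polynomial Finset

noncomputable def myc (n : ℕ) (q : ℝ) (k : ℕ) : ℝ :=
  (if k = n then 1 else -(-1 : ℝ) ^ (k + n)) * q ^ (-((k : ℝ) - n) ^ 2 / 2)

noncomputable def myP (n : ℕ) (q : ℝ) : Polynomial ℝ :=
  ∑ k ∈ Finset.range (2 * n + 1), Polynomial.C (myc n q k) * Polynomial.X ^ k

lemma negpow_sq (k : ℕ) : (-1 : ℝ) ^ k * (-1) ^ k = 1 := by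
  rw [← pow_add, ← two_mul, pow_mul]
  norm_num

lemma sign0 (n : ℕ) (q : ℝ) (k : ℕ) :
    myc n q k * (-1 : ℝ) ^ k
      = (if k = n then (-1 : ℝ) ^ n else -(-1) ^ n) * q ^ (-((k : ℝ) - n) ^ 2 / 2) := by
  rw [myc]
  set a := q ^ (-((k : ℝ) - n) ^ 2 / 2) with ha
  split_ifs with h
  · subst h; ring
  · rw [pow_add]
    linear_combination (-(-1 : ℝ) ^ n * a) * negpow_sq k

lemma sign1 (n : ℕ) (q : ℝ) (k : ℕ) (hn : 1 ≤ n) :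
    myc n q k * ((k : ℝ) * (-1 : ℝ) ^ (k - 1))
      = (if k = n then -(-1 : ℝ) ^ n else (-1) ^ n) * ((k : ℝ) * q ^ (-((k : ℝ) - n) ^ 2 / 2)) := by
  rcases Nat.eq_zero_or_pos k with hk | hk
  · subst hk; simp
  · have hpow : (-1 : ℝ) ^ (k - 1) = -(-1 : ℝ) ^ k := by
      have : (-1 : ℝ) ^ (k - 1) * (-1) = (-1) ^ k := by
        rw [← pow_succ, Nat.sub_add_cancel hk]
      linarith [this]
    rw [hpow, myc]
    set a := q ^ (-((k : ℝ) - n) ^ 2 / 2) with ha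
    split_ifs with h
    · subst h; ring
    · rw [pow_add]
      linear_combination ((k : ℝ) * (-1 : ℝ) ^ n * a) * negpow_sq k

lemma sign2 (n : ℕ) (q : ℝ) (k : ℕ) :
    myc n q k * ((k : ℝ) * (((k - 1 : ℕ) : ℝ) * (-1 : ℝ) ^ (k - 1 - 1)))
      = (if k = n then (-1 : ℝ) ^ n else -(-1) ^ n)
          * (((k : ℝ) * ((k : ℝ) - 1)) * q ^ (-((k : ℝ) - n) ^ 2 / 2)) := by
  match k, (rfl : k = k) with
  | 0, _ => simp
  | 1, _ => norm_num
  | (m + 2), _ =>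
    have hpow : (-1 : ℝ) ^ (m + 2 - 1 - 1) = (-1 : ℝ) ^ (m + 2) := by
      rw [show m + 2 - 1 - 1 = m from by omega, pow_add]
      norm_num
    have hcast : ((m + 2 - 1 : ℕ) : ℝ) = ((m + 2 : ℕ) : ℝ) - 1 := by
      rw [show m + 2 - 1 = m + 1 from by omega]; push_cast; ring
    rw [hpow, hcast, myc]
    set a := q ^ (-(((m + 2 : ℕ) : ℝ) - n) ^ 2 / 2) with ha
    split_ifs with h
    · subst h; ring
    · rw [pow_add]
      linear_combination (-((m + 2 : ℕ) : ℝ) * (((m + 2 : ℕ) : ℝ) - 1) * (-1 : ℝ) ^ n * a) * negpow_sq (m + 2)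

lemma myP_eval (n : ℕ) (q : ℝ) (x : ℝ) :
    (myP n q).eval x = ∑ k ∈ range (2 * n + 1), myc n q k * x ^ k := by
  rw [myP, Polynomial.eval_finset_sum]
  exact Finset.sum_congr rfl (fun k _ => by simp)

lemma myP_deriv_eval (n : ℕ) (q : ℝ) (x : ℝ) :
    (derivative (myP n q)).eval x
      = ∑ k ∈ range (2 * n + 1), myc n q k * ((k : ℝ) * x ^ (k - 1)) := by
  rw [myP, Polynomial.derivative_sum, Polynomial.eval_finset_sum]
  exact Finset.sum_congr rfl (fun k _ => by
    rw [Polynomial.derivative_C_mul, Polynomial.derivative_X_pow]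
    simp)

lemma myP_deriv2_eval (n : ℕ) (q : ℝ) (x : ℝ) :
    (derivative (derivative (myP n q))).eval x
      = ∑ k ∈ range (2 * n + 1),
          myc n q k * ((k : ℝ) * (((k - 1 : ℕ) : ℝ) * x ^ (k - 1 - 1))) := by
  rw [myP, Polynomial.derivative_sum, Polynomial.derivative_sum, Polynomial.eval_finset_sum]
  exact Finset.sum_congr rfl (fun k _ => by
    rw [Polynomial.derivative_C_mul, Polynomial.derivative_X_pow, Polynomial.derivative_C_mul,
      Polynomial.derivative_C_mul, Polynomial.derivative_X_pow]
    simp [mul_assoc])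

noncomputable def S0 (n : ℕ) (q : ℝ) : ℝ := ∑ j ∈ Icc 1 n, q ^ (-(j : ℝ) ^ 2 / 2)
noncomputable def S2 (n : ℕ) (q : ℝ) : ℝ := ∑ j ∈ Icc 1 n, (j : ℝ) ^ 2 * q ^ (-(j : ℝ) ^ 2 / 2)
lemma cast_lo (n j : ℕ) (h : j < n) : ((n - 1 - j : ℕ) : ℝ) = (n : ℝ) - 1 - j := by
  rw [show n - 1 - j = n - (j + 1) from by omega, Nat.cast_sub (by omega)]
  push_cast; ring

lemma center_exp (n : ℕ) (q : ℝ) : q ^ (-((n : ℝ) - (n : ℕ)) ^ 2 / 2) = 1 := by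
  rw [show -((n : ℝ) - (n : ℕ)) ^ 2 / 2 = 0 from by ring, Real.rpow_zero]

lemma hg0 (n : ℕ) (q : ℝ) (j : ℕ) (h : j < n) :
    q ^ (-(((n + 1 + j : ℕ) : ℝ) - n) ^ 2 / 2) + q ^ (-(((n - 1 - j : ℕ) : ℝ) - n) ^ 2 / 2)
      = 2 * q ^ (-((j + 1 : ℕ) : ℝ) ^ 2 / 2) := by
  rw [cast_lo n j h]
  rw [show -(((n + 1 + j : ℕ) : ℝ) - n) ^ 2 / 2 = -((j + 1 : ℕ) : ℝ) ^ 2 / 2 from by push_cast; ring,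
    show -(((n : ℝ) - 1 - j) - n) ^ 2 / 2 = -((j + 1 : ℕ) : ℝ) ^ 2 / 2 from by push_cast; ring]
  ring

lemma hg1 (n : ℕ) (q : ℝ) (j : ℕ) (h : j < n) :
    ((n + 1 + j : ℕ) : ℝ) * q ^ (-(((n + 1 + j : ℕ) : ℝ) - n) ^ 2 / 2)
      + ((n - 1 - j : ℕ) : ℝ) * q ^ (-(((n - 1 - j : ℕ) : ℝ) - n) ^ 2 / 2)
      = 2 * (n : ℝ) * q ^ (-((j + 1 : ℕ) : ℝ) ^ 2 / 2) := by
  rw [cast_lo n j h]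
  rw [show -(((n + 1 + j : ℕ) : ℝ) - n) ^ 2 / 2 = -((j + 1 : ℕ) : ℝ) ^ 2 / 2 from by push_cast; ring,
    show -(((n : ℝ) - 1 - j) - n) ^ 2 / 2 = -((j + 1 : ℕ) : ℝ) ^ 2 / 2 from by push_cast; ring]
  push_cast
  ring

lemma hg2 (n : ℕ) (q : ℝ) (j : ℕ) (h : j < n) :
    (((n + 1 + j : ℕ) : ℝ) * (((n + 1 + j : ℕ) : ℝ) - 1)) * q ^ (-(((n + 1 + j : ℕ) : ℝ) - n) ^ 2 / 2)
      + (((n - 1 - j : ℕ) : ℝ) * (((n - 1 - j : ℕ) : ℝ) - 1)) * q ^ (-(((n - 1 - j : ℕ) : ℝ) - n) ^ 2 / 2)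
      = (2 * (n : ℝ) * ((n : ℝ) - 1) + 2 * ((j + 1 : ℕ) : ℝ) ^ 2) * q ^ (-((j + 1 : ℕ) : ℝ) ^ 2 / 2) := by
  rw [cast_lo n j h]
  rw [show -(((n + 1 + j : ℕ) : ℝ) - n) ^ 2 / 2 = -((j + 1 : ℕ) : ℝ) ^ 2 / 2 from by push_cast; ring,
    show -(((n : ℝ) - 1 - j) - n) ^ 2 / 2 = -((j + 1 : ℕ) : ℝ) ^ 2 / 2 from by push_cast; ring]
  push_cast
  ring
lemma E0_eq (n : ℕ) (q : ℝ) :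
    (myP n q).eval (-1) = (-1) ^ n * (1 - 2 * S0 n q) := by
  rw [myP_eval]
  rw [Finset.sum_congr rfl (fun k _ => sign0 n q k)]
  rw [main_sum n ((-1 : ℝ) ^ n) (-(-1 : ℝ) ^ n)
    (fun k => q ^ (-((k : ℝ) - n) ^ 2 / 2))
    (fun j => 2 * q ^ (-(j : ℝ) ^ 2 / 2))
    (fun j hj => by simpa using hg0 n q j hj)]
  rw [center_exp, S0, ← Finset.mul_sum]
  ring

lemma E1_eq (n : ℕ) (q : ℝ) (hn : 1 ≤ n) :
    (derivative (myP n q)).eval (-1) = (-1) ^ n * (-(n : ℝ) * (1 - 2 * S0 n q)) := by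
  rw [myP_deriv_eval]
  rw [Finset.sum_congr rfl (fun k _ => sign1 n q k hn)]
  rw [main_sum n (-(-1 : ℝ) ^ n) ((-1 : ℝ) ^ n)
    (fun k => (k : ℝ) * q ^ (-((k : ℝ) - n) ^ 2 / 2))
    (fun j => 2 * (n : ℝ) * q ^ (-(j : ℝ) ^ 2 / 2))
    (fun j hj => by simpa using hg1 n q j hj)]
  rw [center_exp, S0, ← Finset.mul_sum]
  ring

lemma E2_eq (n : ℕ) (q : ℝ) :
    (derivative (derivative (myP n q))).eval (-1)
      = (-1) ^ n * ((n : ℝ) * ((n : ℝ) - 1) * (1 - 2 * S0 n q) - 2 * S2 n q) := by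
  rw [myP_deriv2_eval]
  rw [Finset.sum_congr rfl (fun k _ => sign2 n q k)]
  rw [main_sum n ((-1 : ℝ) ^ n) (-(-1 : ℝ) ^ n)
    (fun k => ((k : ℝ) * ((k : ℝ) - 1)) * q ^ (-((k : ℝ) - n) ^ 2 / 2))
    (fun j => (2 * (n : ℝ) * ((n : ℝ) - 1) + 2 * (j : ℝ) ^ 2) * q ^ (-(j : ℝ) ^ 2 / 2))
    (fun j hj => by simpa using hg2 n q j hj)]
  rw [center_exp, S0, S2]
  rw [show ∑ j ∈ Icc 1 n, (2 * (n : ℝ) * ((n : ℝ) - 1) + 2 * (j : ℝ) ^ 2) * q ^ (-(j : ℝ) ^ 2 / 2)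
      = 2 * (n : ℝ) * ((n : ℝ) - 1) * ∑ j ∈ Icc 1 n, q ^ (-(j : ℝ) ^ 2 / 2)
        + 2 * ∑ j ∈ Icc 1 n, (j : ℝ) ^ 2 * q ^ (-(j : ℝ) ^ 2 / 2) from by
    rw [Finset.mul_sum, Finset.mul_sum, ← Finset.sum_add_distrib]
    exact Finset.sum_congr rfl (fun j _ => by ring)]
  ring
lemma myP_coeff (n : ℕ) (q : ℝ) (k : ℕ) (hk : k ≤ 2 * n) :
    (myP n q).coeff k = myc n q k := by
  rw [myP, Polynomial.finset_sum_coeff]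
  rw [Finset.sum_eq_single k]
  · simp
  · intro j _ hj
    simp [Polynomial.coeff_C_mul, Polynomial.coeff_X_pow, Ne.symm hj]
  · intro h
    exact absurd (Finset.mem_range.mpr (by omega)) h

lemma myc_pos_abs (n : ℕ) (q : ℝ) (hq : 0 < q) (k : ℕ) :
    |myc n q k| = q ^ (-((k : ℝ) - n) ^ 2 / 2) := by
  rw [myc, abs_mul]
  have h1 : |if k = n then (1:ℝ) else -(-1 : ℝ) ^ (k + n)| = 1 := by
    split
    · simp
    · rw [abs_neg, abs_pow, abs_neg, abs_one, one_pow]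
  rw [h1, one_mul, abs_of_pos (Real.rpow_pos_of_pos hq _)]

lemma myc_ne_zero (n : ℕ) (q : ℝ) (hq : 0 < q) (k : ℕ) : myc n q k ≠ 0 := by
  intro h
  have := myc_pos_abs n q hq k
  rw [h, abs_zero] at this
  exact absurd this.symm (ne_of_gt (Real.rpow_pos_of_pos hq _))

lemma myP_natDegree (n : ℕ) (q : ℝ) (hq : 0 < q) : (myP n q).natDegree = 2 * n := by
  apply le_antisymm
  · apply Polynomial.natDegree_sum_le_of_forall_le
    intro k hk
    refine le_trans (Polynomial.natDegree_C_mul_le _ _) ?_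
    simpa using Nat.lt_succ_iff.mp (Finset.mem_range.mp hk)
  · apply Polynomial.le_natDegree_of_ne_zero
    rw [myP_coeff n q _ le_rfl]
    exact myc_ne_zero n q hq _

lemma myP_quot (n : ℕ) (q : ℝ) (hq : 0 < q) (k : ℕ) (h2 : 2 ≤ k) (hk : k ≤ 2 * n) :
    |((myP n q).coeff (k - 1)) ^ 2 / ((myP n q).coeff (k - 2) * (myP n q).coeff k)| = q := by
  rw [myP_coeff n q (k-1) (by omega), myP_coeff n q (k-2) (by omega), myP_coeff n q k hk]
  rw [abs_div, abs_mul, abs_pow, myc_pos_abs n q hq, myc_pos_abs n q hq, myc_pos_abs n q hq]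
  rw [← Real.rpow_natCast (q ^ (-((↑(k-1) : ℝ) - n) ^ 2 / 2)) 2, ← Real.rpow_mul hq.le,
    ← Real.rpow_add hq, ← Real.rpow_sub hq]
  have e1 : ((k - 1 : ℕ) : ℝ) = (k : ℝ) - 1 := by
    push_cast [Nat.cast_sub (by omega : 1 ≤ k)]; ring
  have e2 : ((k - 2 : ℕ) : ℝ) = (k : ℝ) - 2 := by
    push_cast [Nat.cast_sub h2]; ring
  rw [e1, e2]
  have : -(((k:ℝ) - 1) - n) ^ 2 / 2 * 2 - (-(((k:ℝ) - 2) - n) ^ 2 / 2 + -((k:ℝ) - n) ^ 2 / 2) = 1 := by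
    ring
  push_cast
  rw [this, Real.rpow_one]


/-- For every positive integer `n` and `ε > 0` there exists a real polynomial of degree
`2n` with nonzero coefficients, with `|q_k(P)| > b_{2n} - ε` for all `k = 2, …, 2n`,
having a nonreal root. -/
theorem stmt_13 (n : ℕ) (hn : 0 < n) (b : ℝ)
    (hb : 1 < b ∧ 1 - 2 * ∑ k ∈ Finset.Icc 1 n, b ^ (-(k : ℝ) ^ 2 / 2) = 0)
    (ε : ℝ) (hε : 0 < ε) :
    ∃ P : Polynomial ℝ, P.natDegree = 2 * n ∧
      (∀ k, k ≤ 2 * n → P.coeff k ≠ 0) ∧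
      (∀ k, 2 ≤ k → k ≤ 2 * n →
        b - ε < |(P.coeff (k - 1)) ^ 2 / (P.coeff (k - 2) * P.coeff k)|) ∧
      (∃ z : ℂ, (P.map (algebraMap ℝ ℂ)).IsRoot z ∧ z.im ≠ 0) := by
  obtain ⟨hb1, hbeq⟩ := hb
  have hb0 : (0 : ℝ) < b := lt_trans one_pos hb1
  have hS0b : S0 n b = 1 / 2 := by
    have h : S0 n b = ∑ k ∈ Finset.Icc 1 n, b ^ (-(k : ℝ) ^ 2 / 2) := rfl
    rw [h]; linarith
  set c : ℝ := b ^ (-(1 : ℝ) ^ 2 / 2) with hc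
  have hcpos : 0 < c := Real.rpow_pos_of_pos hb0 _
  have hεc : 0 < c / (2 * n) := by positivity
  have hcont : ContinuousAt (fun q : ℝ => S0 n q) b := by
    apply tendsto_finset_sum
    intro j _
    exact Real.continuousAt_rpow_const b _ (Or.inl hb0.ne')
  obtain ⟨δ₀, hδ₀pos, hδ₀⟩ := Metric.continuousAt_iff.mp hcont (c / (2 * n)) hεc
  set q : ℝ := b - min δ₀ (min ε (b - 1)) / 2 with hqdef
  have hminpos : 0 < min δ₀ (min ε (b - 1)) := by
    apply lt_min hδ₀pos
    apply lt_min hε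
    linarith
  have hqb : q < b := by
    rw [hqdef]; linarith
  have hq1 : 1 < q := by
    have h1 : min δ₀ (min ε (b - 1)) ≤ b - 1 := le_trans (min_le_right _ _) (min_le_right _ _)
    rw [hqdef]; linarith
  have hq0 : 0 < q := lt_trans one_pos hq1
  have hqε : b - ε < q := by
    have h1 : min δ₀ (min ε (b - 1)) ≤ ε := le_trans (min_le_right _ _) (min_le_left _ _)
    rw [hqdef]; linarith
  have hqdist : dist q b < δ₀ := by
    rw [Real.dist_eq, hqdef]
    rw [abs_of_nonpos (by linarith)]
    have := min_le_left δ₀ (min ε (b - 1))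
    linarith
  have hnear : |S0 n q - S0 n b| < c / (2 * n) := by
    have := hδ₀ hqdist
    rwa [Real.dist_eq] at this
  -- δ := 2 * S0 n q - 1 > 0
  have hS0mono : S0 n b < S0 n q := by
    rw [S0, S0]
    apply Finset.sum_lt_sum_of_nonempty
    · exact Finset.nonempty_Icc.mpr hn
    · intro j hj
      apply Real.rpow_lt_rpow_of_neg hq0 hqb
      have hj1 : 1 ≤ j := (Finset.mem_Icc.mp hj).1
      have : (1 : ℝ) ≤ (j : ℝ) := by exact_mod_cast hj1
      nlinarith
  have hApos : 0 < 2 * S0 n q - 1 := by rw [hS0b] at hS0mono; linarith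
  have hAsmall : (n : ℝ) * (2 * S0 n q - 1) < c := by
    have h1 : S0 n q - S0 n b < c / (2 * n) := lt_of_abs_lt hnear
    have hn' : (0 : ℝ) < (n : ℝ) := by exact_mod_cast hn
    rw [hS0b] at h1
    calc (n : ℝ) * (2 * S0 n q - 1) = 2 * (n : ℝ) * (S0 n q - 1 / 2) := by ring
    _ < 2 * (n : ℝ) * (c / (2 * n)) := by
        apply mul_lt_mul_of_pos_left h1 (by positivity)
    _ = c := by field_simp
  have hcS2 : c ≤ S2 n q := by
    have hterm : c ≤ ((1 : ℕ) : ℝ) ^ 2 * q ^ (-((1 : ℕ) : ℝ) ^ 2 / 2) := by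
      rw [hc]
      push_cast
      rw [one_pow, one_mul]
      exact Real.rpow_le_rpow_of_nonpos hq0 hqb.le (by norm_num)
    refine le_trans hterm ?_
    apply Finset.single_le_sum (f := fun j : ℕ => (j : ℝ) ^ 2 * q ^ (-(j : ℝ) ^ 2 / 2))
    · intro j _
      have := Real.rpow_pos_of_pos hq0 (-(j : ℝ) ^ 2 / 2)
      positivity
    · exact Finset.mem_Icc.mpr ⟨le_refl 1, hn⟩
  refine ⟨myP n q, myP_natDegree n q hq0, ?_, ?_, ?_⟩
  · intro k hk
    rw [myP_coeff n q k hk]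
    exact myc_ne_zero n q hq0 k
  · intro k h2 hk
    rw [myP_quot n q hq0 k h2 hk]
    exact hqε
  · by_contra hcon
    push_neg at hcon
    have hall : ∀ z : ℂ, ((myP n q).map (algebraMap ℝ ℂ)).IsRoot z → z.im = 0 :=
      fun z hz => hcon z hz
    have hlag := laguerre_aux (myP n q).natDegree (myP n q) le_rfl hall (-1)
    rw [E0_eq, E1_eq n q hn, E2_eq] at hlag
    have hsq : ((-1 : ℝ) ^ n) ^ 2 = 1 := by
      rw [← pow_mul, mul_comm, pow_mul]; norm_num
    have hS2pos : 0 < S2 n q := lt_of_lt_of_le hcpos hcS2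
    set A := 1 - 2 * S0 n q with hA
    have hAneg : A < 0 := by rw [hA]; linarith
    have hnA : (n : ℝ) * (-A) < c := by rw [hA]; push_cast at hAsmall ⊢; linarith [hAsmall]
    have h1 : A * ((n : ℝ) * ((n : ℝ) - 1) * A - 2 * S2 n q) ≤ (n : ℝ) ^ 2 * A ^ 2 := by
      have e1 : A * ((n : ℝ) * ((n : ℝ) - 1) * A - 2 * S2 n q)
          = ((-1 : ℝ) ^ n * A) * ((-1 : ℝ) ^ n * ((n : ℝ) * ((n : ℝ) - 1) * A - 2 * S2 n q)) := by
        rw [show ((-1 : ℝ) ^ n * A) * ((-1 : ℝ) ^ n * ((n : ℝ) * ((n : ℝ) - 1) * A - 2 * S2 n q))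
            = ((-1 : ℝ) ^ n) ^ 2 * (A * ((n : ℝ) * ((n : ℝ) - 1) * A - 2 * S2 n q)) from by ring,
          hsq, one_mul]
      have e2 : ((-1 : ℝ) ^ n * (-(n : ℝ) * A)) ^ 2 = (n : ℝ) ^ 2 * A ^ 2 := by
        rw [mul_pow, hsq, one_mul]; ring
      rw [e1, ← e2]
      exact hlag
    have hA' : 0 < -A := neg_pos.mpr hAneg
    have hii : (n : ℝ) * (-A) * (-A) < c * (-A) := mul_lt_mul_of_pos_right hnA hA'
    have hiii : c * (-A) ≤ S2 n q * (-A) := mul_le_mul_of_nonneg_right hcS2 hA'.le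
    linarith [h1, hii, hiii, mul_pos hS2pos hA']
end

section
/- Let n be a positive integer and let P(z) = ∑_{k=0}^{2n+1} a_k z^k be a polynomial with a_k ∈ ℝ \ {0} for all k. If |q_k(P)| ≥ b_{2n+2} for all k = 2, 3, …, 2n+1, then all zeros of P are real. -/
lemma stmt14_sign (A B : ℝ) (h : |A - B| < |B|) : 0 < A * B := by
  rcases abs_cases (A - B) with ⟨h1, _⟩ | ⟨h1, _⟩ <;>
    rcases abs_cases B with ⟨h2, _⟩ | ⟨h2, _⟩ <;> nlinarith

lemma stmt14_mulneg1 {a b : ℝ} (h : a * b < 0) (ha : a < 0) : 0 < b := by nlinarith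
lemma stmt14_mulneg2 {a b : ℝ} (h : a * b < 0) (ha : 0 ≤ a) : b < 0 := by
  rcases ha.lt_or_eq with h1 | h1
  · nlinarith
  · exfalso; rw [← h1] at h; simp at h
lemma stmt14_mulpos {a b : ℝ} (h : 0 < a * b) (hb : b < 0) : a < 0 := by nlinarith
lemma stmt14_sum (n : ℕ) (b : ℝ) (hb1 : 1 < b)
    (hs : ∑ j ∈ Finset.range (n+1), b ^ (-((j:ℝ)+1)^2/2) = 1/2) :
    ∀ k ≤ 2*n+1, (∑ j ∈ Finset.range k, b ^ (-((j:ℝ)+1)^2/2))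
      + (∑ j ∈ Finset.range (2*n+1-k), b ^ (-((j:ℝ)+1)^2/2)) < 1 := by
  have hb0 : (0:ℝ) < b := lt_trans one_pos hb1
  set c : ℕ → ℝ := fun m => b ^ (-((m:ℝ)+1)^2/2) with hc
  have cpos : ∀ m, 0 < c m := fun m => Real.rpow_pos_of_pos hb0 _
  have cmono : ∀ {m m' : ℕ}, m ≤ m' → c m' ≤ c m := by
    intro m m' h
    apply Real.rpow_le_rpow_of_exponent_le hb1.le
    have : (m:ℝ) ≤ (m':ℝ) := by exact_mod_cast h
    nlinarith
  set T : ℕ → ℝ := fun t => ∑ j ∈ Finset.range t, c j with hT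
  have key : ∀ a ≤ n, T a + T (2*n+1-a) < 1 := by
    intro a ha
    set d := n - a with hd
    have h1 : 2*n+1-a = (n+1) + d := by omega
    have h2 : n+1 = a + (d+1) := by omega
    have e1 : T ((n+1)+d) = T (n+1) + ∑ i ∈ Finset.range d, c ((n+1)+i) :=
      Finset.sum_range_add c (n+1) d
    have e2 : T (a+(d+1)) = T a + ∑ i ∈ Finset.range (d+1), c (a+i) :=
      Finset.sum_range_add c a (d+1)
    have e3 : ∑ i ∈ Finset.range d, c ((n+1)+i) < ∑ i ∈ Finset.range (d+1), c (a+i) := by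
      have le1 : ∑ i ∈ Finset.range d, c ((n+1)+i) ≤ ∑ i ∈ Finset.range d, c (a+i) :=
        Finset.sum_le_sum fun i _ => cmono (by omega)
      have : ∑ i ∈ Finset.range (d+1), c (a+i)
          = ∑ i ∈ Finset.range d, c (a+i) + c (a+d) := Finset.sum_range_succ _ d
      have := cpos (a+d)
      linarith
    have hTn : T (n+1) = 1/2 := hs
    rw [h1, e1]
    have : T a + ∑ i ∈ Finset.range (d+1), c (a+i) = 1/2 := by rw [← e2, ← h2, hTn]
    linarith
  intro k hk
  rcases le_or_gt k n with h | h
  · exact key k h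
  · have ha : 2*n+1-k ≤ n := by omega
    have := key (2*n+1-k) ha
    have h2 : 2*n+1-(2*n+1-k) = k := by omega
    rw [h2] at this
    linarith

set_option maxHeartbeats 4000000 in
/-- If `P` is a real polynomial of degree `2n+1` with nonzero coefficients and
`|q_k(P)| ≥ b_{2n+2}` for all `k = 2, …, 2n+1`, then all (complex) zeros of `P`
are real. -/
theorem stmt_14 (n : ℕ) (hn : 0 < n) (b : ℝ)
    (hb : 1 < b ∧ 1 - 2 * ∑ k ∈ Finset.Icc 1 (n + 1), b ^ (-(k : ℝ) ^ 2 / 2) = 0)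
    (P : Polynomial ℝ) (hdeg : P.natDegree = 2 * n + 1)
    (hcoeff : ∀ k, k ≤ 2 * n + 1 → P.coeff k ≠ 0)
    (hq : ∀ k, 2 ≤ k → k ≤ 2 * n + 1 →
      b ≤ |(P.coeff (k - 1)) ^ 2 / (P.coeff (k - 2) * P.coeff k)|) :
    ∀ z : ℂ, (P.map (algebraMap ℝ ℂ)).IsRoot z → z.im = 0 := by
  obtain ⟨hb1, hbeq⟩ := hb
  have hb0 : (0:ℝ) < b := by linarith
  set N := 2*n+1 with hN
  set A : ℕ → ℝ := fun j => |P.coeff j| with hA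
  have hApos : ∀ j, j ≤ N → 0 < A j := fun j hj => abs_pos.2 (hcoeff j hj)
  set s := Real.sqrt b with hsdef
  have hs0 : 0 < s := Real.sqrt_pos.2 hb0
  have hs2 : s^2 = b := Real.sq_sqrt hb0.le
  have hs1 : 1 < s := by nlinarith
  set M : ℕ → ℝ := fun k => A k / A (k+1) with hM
  have hMpos : ∀ k, k+1 ≤ N → 0 < M k := fun k hk =>
    div_pos (hApos k (by omega)) (hApos (k+1) hk)
  have hstep : ∀ k, k+2 ≤ N → b * M k ≤ M (k+1) := by
    intro k hk
    have h := hq (k+2) (by omega) (by omega)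
    have e1 : k+2-1 = k+1 := by omega
    have e2 : k+2-2 = k := by omega
    rw [e1, e2] at h
    rw [abs_div, abs_mul, abs_pow] at h
    have hden : 0 < A k * A (k+2) := mul_pos (hApos k (by omega)) (hApos (k+2) hk)
    rw [le_div_iff₀ hden] at h
    have h1 : b * (A k * A (k+2)) ≤ A (k+1) ^ 2 := h
    have hk1 : 0 < A (k+1) := hApos (k+1) (by omega)
    have hk2 : 0 < A (k+2) := hApos (k+2) hk
    have hk0 : 0 < A k := hApos k (by omega)
    show b * (A k / A (k+1)) ≤ A (k+1) / A (k+2)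
    rw [mul_div_assoc', div_le_div_iff₀ hk1 hk2]
    nlinarith
  have hchain : ∀ i d, i + d + 1 ≤ N → b^d * M i ≤ M (i+d) := by
    intro i d
    induction d with
    | zero => intro h; simp
    | succ d ih =>
      intro h
      have h1 := ih (by omega)
      have h2 := hstep (i+d) (by omega)
      have hMi : 0 < M i := hMpos i (by omega)
      calc b^(d+1) * M i = b * (b^d * M i) := by ring
        _ ≤ b * M (i+d) := by nlinarith
        _ ≤ M (i+d+1) := h2
  set R : ℕ → ℝ := fun k => if k = 0 then M 0 / s else M (k-1) * s with hR
  have hRpos : ∀ k, k ≤ N → 0 < R k := by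
    intro k hk
    by_cases h : k = 0
    · simp only [hR, h, if_true]; exact div_pos (hMpos 0 (by omega)) hs0
    · simp only [hR, if_neg h]; exact mul_pos (hMpos (k-1) (by omega)) hs0
  have hRM : ∀ k, k ≤ N → ∀ t, k ≤ t → t+1 ≤ N → R k * (s * b^(t-k)) ≤ M t := by
    intro k hk t hkt ht
    by_cases h : k = 0
    · subst h
      have := hchain 0 t (by omega)
      simp only [hR, if_true, Nat.sub_zero, zero_add] at *
      calc M 0 / s * (s * b^t) = b^t * M 0 := by field_simp
        _ ≤ M t := by simpa using this
    · have hk1 : 1 ≤ k := Nat.one_le_iff_ne_zero.2 h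
      have := hchain (k-1) (t-k+1) (by omega)
      have e : k-1 + (t-k+1) = t := by omega
      rw [e] at this
      simp only [hR, if_neg h]
      calc M (k-1) * s * (s * b^(t-k)) = s^2 * b^(t-k) * M (k-1) := by ring
        _ = b^(t-k+1) * M (k-1) := by rw [hs2]; ring
        _ ≤ M t := this
  have hRM2 : ∀ k, k ≤ N → ∀ t, t + 1 ≤ k → M t * (s * b^(k-1-t)) ≤ R k := by
    intro k hk t ht
    have h : k ≠ 0 := by omega
    have := hchain t (k-1-t) (by omega)
    have e : t + (k-1-t) = k-1 := by omega
    rw [e] at this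
    simp only [hR, if_neg h]
    calc M t * (s * b^(k-1-t)) = (b^(k-1-t) * M t) * s := by ring
      _ ≤ M (k-1) * s := by nlinarith
  have hsr : s = b ^ ((1:ℝ)/2) := Real.sqrt_eq_rpow b
  set c : ℕ → ℝ := fun m => b ^ (-(m:ℝ)^2/2) with hcdef
  have cpos : ∀ m, 0 < c m := fun m => Real.rpow_pos_of_pos hb0 _
  have c0 : c 0 = 1 := by simp [hcdef]
  have crat : ∀ d : ℕ, c d = c (d+1) * (s * b^d) := by
    intro d
    have hbd : (b:ℝ)^d = b ^ ((d:ℕ):ℝ) := (Real.rpow_natCast b d).symm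
    rw [hcdef]
    simp only []
    rw [hsr, hbd, ← Real.rpow_add hb0, ← Real.rpow_add hb0]
    congr 1
    push_cast
    ring
  have up : ∀ k, k ≤ N → ∀ d, k + d ≤ N → A (k+d) * R k ^ (k+d) ≤ c d * (A k * R k ^ k) := by
    intro k hk d
    induction d with
    | zero => intro _; simp [c0]
    | succ d ih =>
      intro h
      have ih' := ih (by omega)
      have hscale : 0 < s * b^d := mul_pos hs0 (pow_pos hb0 d)
      have hAkd1 : 0 < A (k+d+1) := hApos _ (by omega)
      have hAkd : 0 < A (k+d) := hApos _ (by omega)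
      have hRk : 0 < R k := hRpos k hk
      have hr : R k * (s * b^d) ≤ M (k+d) := by
        have h2 := hRM k hk (k+d) (by omega) (by omega)
        rwa [show k+d-k = d by omega] at h2
      have h1 : A (k+d+1) * (R k * (s * b^d)) ≤ A (k+d) := by
        calc A (k+d+1) * (R k * (s*b^d)) ≤ A (k+d+1) * M (k+d) :=
              mul_le_mul_of_nonneg_left hr hAkd1.le
          _ = A (k+d) := by
              rw [hM]; field_simp
      apply le_of_mul_le_mul_right _ hscale
      have e : k+(d+1) = (k+d)+1 := by ring
      calc A (k+(d+1)) * R k ^ (k+(d+1)) * (s*b^d)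
          = (A (k+d+1) * (R k * (s*b^d))) * R k ^ (k+d) := by
            rw [e, pow_succ]; ring
        _ ≤ A (k+d) * R k ^ (k+d) := by
            apply mul_le_mul_of_nonneg_right h1 (pow_nonneg hRk.le _)
        _ ≤ c d * (A k * R k ^ k) := ih'
        _ = c (d+1) * (A k * R k ^ k) * (s*b^d) := by rw [crat d]; ring
  have down : ∀ k, k ≤ N → ∀ d, d ≤ k → A (k-d) * R k ^ (k-d) ≤ c d * (A k * R k ^ k) := by
    intro k hk d
    induction d with
    | zero => intro _; simp [c0]
    | succ d ih =>
      intro h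
      have ih' := ih (by omega)
      have hscale : 0 < s * b^d := mul_pos hs0 (pow_pos hb0 d)
      set t := k - d - 1 with htdef
      have ht1 : k - d = t + 1 := by omega
      have ht2 : k - (d+1) = t := by omega
      have hAt : 0 < A t := hApos _ (by omega)
      have hAt1 : 0 < A (t+1) := hApos _ (by omega)
      have hRk : 0 < R k := hRpos k hk
      have hr : M t * (s * b^d) ≤ R k := by
        have h2 := hRM2 k hk t (by omega)
        rwa [show k-1-t = d by omega] at h2
      have h1 : A t * (s * b^d) ≤ R k * A (t+1) := by
        have h3 : A t = M t * A (t+1) := by rw [hM]; field_simp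
        calc A t * (s * b^d) = (M t * (s * b^d)) * A (t+1) := by rw [h3]; ring
          _ ≤ R k * A (t+1) := mul_le_mul_of_nonneg_right hr hAt1.le
      apply le_of_mul_le_mul_right _ hscale
      calc A (k-(d+1)) * R k ^ (k-(d+1)) * (s*b^d)
          = (A t * (s*b^d)) * R k ^ t := by rw [ht2]; ring
        _ ≤ (R k * A (t+1)) * R k ^ t := mul_le_mul_of_nonneg_right h1 (pow_nonneg hRk.le _)
        _ = A (t+1) * R k ^ (t+1) := by rw [pow_succ]; ring
        _ ≤ c d * (A k * R k ^ k) := by rw [← ht1]; exact ih'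
        _ = c (d+1) * (A k * R k ^ k) * (s*b^d) := by rw [crat d]; ring
  have dom : ∀ k, k ≤ N → ∀ j, j ≤ N →
      A j * R k ^ j ≤ c ((k-j)+(j-k)) * (A k * R k ^ k) := by
    intro k hk j hj
    rcases le_total j k with h | h
    · have e : (k-j)+(j-k) = k - j := by omega
      rw [e]
      have := down k hk (k-j) (by omega)
      rwa [show k-(k-j) = j by omega] at this
    · have e : (k-j)+(j-k) = j - k := by omega
      rw [e]
      have := up k hk (j-k) (by omega)
      rwa [show k+(j-k) = j by omega] at this
  have hcc : ∀ j : ℕ, c (j+1) = b ^ (-((j:ℝ)+1)^2/2) := by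
    intro j
    show b ^ (-((↑(j+1):ℝ))^2/2) = b ^ (-((j:ℝ)+1)^2/2)
    congr 1; push_cast; ring
  have hsum1 : ∑ j ∈ Finset.range (n+1), b ^ (-((j:ℝ)+1)^2/2) = 1/2 := by
    have h : ∑ k ∈ Finset.Icc 1 (n+1), b ^ (-(k:ℝ)^2/2)
        = ∑ j ∈ Finset.range (n+1), b ^ (-((j:ℝ)+1)^2/2) := by
      rw [show Finset.Icc 1 (n+1) = Finset.Ico 1 (n+2) from by rw [← Finset.Ico_add_one_right_eq_Icc]; rfl,
        Finset.sum_Ico_eq_sum_range]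
      apply Finset.sum_congr (by norm_num)
      intro j _; congr 1; push_cast; ring
    rw [← h]; linarith
  have hsumlt : ∀ k, k ≤ N → ∑ j ∈ (Finset.range (N+1)).erase k, c ((k-j)+(j-k)) < 1 := by
    intro k hk
    have hmem : k ∈ Finset.range (N+1) := by simp; omega
    have hsplit := Finset.sum_erase_add (Finset.range (N+1)) (fun j => c ((k-j)+(j-k))) hmem
    simp only [Nat.sub_self, Nat.add_zero] at hsplit
    have htot : ∑ j ∈ Finset.range (N+1), c ((k-j)+(j-k))
        = (∑ j ∈ Finset.range (k+1), c (k-j)) + ∑ j ∈ Finset.Ico (k+1) (N+1), c (j-k) := by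
      rw [Finset.range_eq_Ico,
        ← Finset.sum_Ico_consecutive (fun j => c ((k-j)+(j-k))) (Nat.zero_le (k+1)) (by omega)]
      congr 1
      · rw [← Finset.range_eq_Ico]
        apply Finset.sum_congr rfl
        intro j hj
        simp only [Finset.mem_range] at hj
        congr 1; omega
      · apply Finset.sum_congr rfl
        intro j hj
        simp only [Finset.mem_Ico] at hj
        congr 1; omega
    have hlow : ∑ j ∈ Finset.range (k+1), c (k-j)
        = (∑ j ∈ Finset.range k, c (j+1)) + c 0 := by
      calc ∑ j ∈ Finset.range (k+1), c (k-j)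
          = ∑ j ∈ Finset.range (k+1), c j := Finset.sum_range_reflect c (k+1)
        _ = _ := Finset.sum_range_succ' c k
    have hhigh : ∑ j ∈ Finset.Ico (k+1) (N+1), c (j-k)
        = ∑ j ∈ Finset.range (N-k), c (j+1) := by
      rw [Finset.sum_Ico_eq_sum_range]
      have e2 : N+1-(k+1) = N-k := by omega
      rw [e2]
      apply Finset.sum_congr rfl
      intro j _; congr 1; omega
    have ecc : ∀ t : ℕ, ∑ j ∈ Finset.range t, c (j+1)
        = ∑ j ∈ Finset.range t, b ^ (-((j:ℝ)+1)^2/2) :=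
      fun t => Finset.sum_congr rfl (fun j _ => hcc j)
    have hlt : (∑ j ∈ Finset.range k, c (j+1)) + (∑ j ∈ Finset.range (N-k), c (j+1)) < 1 := by
      rw [ecc k, ecc (N-k)]
      exact stmt14_sum n b hb1 hsum1 k hk
    linarith [hsplit, htot, hlow, hhigh, cpos 0]
  have hdom2 : ∀ k, k ≤ N → ∀ x : ℝ, |x| = R k →
      |P.eval x - P.coeff k * x^k| < |P.coeff k * x^k| := by
    intro k hk x hx
    have heval : P.eval x = ∑ j ∈ Finset.range (N+1), P.coeff j * x^j := by
      rw [Polynomial.eval_eq_sum_range, hdeg]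
    have hmem : k ∈ Finset.range (N+1) := by simp; omega
    have hsplit := Finset.sum_erase_add (Finset.range (N+1)) (fun j => P.coeff j * x^j) hmem
    have e1 : P.eval x - P.coeff k * x^k
        = ∑ j ∈ (Finset.range (N+1)).erase k, P.coeff j * x^j := by
      rw [heval, ← hsplit]; ring
    rw [e1]
    have hXpos : 0 < A k * R k ^ k := mul_pos (hApos k hk) (pow_pos (hRpos k hk) k)
    calc |∑ j ∈ (Finset.range (N+1)).erase k, P.coeff j * x^j|
        ≤ ∑ j ∈ (Finset.range (N+1)).erase k, |P.coeff j * x^j| :=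
          Finset.abs_sum_le_sum_abs _ _
      _ ≤ ∑ j ∈ (Finset.range (N+1)).erase k, c ((k-j)+(j-k)) * (A k * R k ^ k) := by
          apply Finset.sum_le_sum
          intro j hj
          have hjN : j ≤ N := by
            have := Finset.mem_of_mem_erase hj
            simp only [Finset.mem_range] at this; omega
          have : |P.coeff j * x^j| = A j * R k ^ j := by
            rw [abs_mul, abs_pow, hx]
          rw [this]
          exact dom k hk j hjN
      _ = (∑ j ∈ (Finset.range (N+1)).erase k, c ((k-j)+(j-k))) * (A k * R k ^ k) :=
          (Finset.sum_mul _ _ _).symm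
      _ < 1 * (A k * R k ^ k) := mul_lt_mul_of_pos_right (hsumlt k hk) hXpos
      _ = |P.coeff k * x^k| := by rw [one_mul, abs_mul, abs_pow, hx]
  have hsign : ∀ k, k ≤ N → ∀ x : ℝ, |x| = R k → 0 < P.eval x * (P.coeff k * x ^ k) :=
    fun k hk x hx => stmt14_sign _ _ (hdom2 k hk x hx)
  have hRlt : ∀ k, k+1 ≤ N → R k < R (k+1) := by
    intro k hk
    have hM0 : 0 < M k := hMpos k (by omega)
    by_cases h : k = 0
    · subst h
      have hM0' : 0 < M 0 := hM0
      show (if (0:ℕ) = 0 then M 0 / s else M (0-1) * s) < (if (1:ℕ) = 0 then M 0 / s else M (1-1) * s)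
      simp only [if_true, if_neg (by norm_num : (1:ℕ) ≠ 0)]
      have h1 : M 0 / s < M 0 := div_lt_self hM0' hs1
      have h2 : M 0 < M 0 * s := (lt_mul_iff_one_lt_right hM0').2 hs1
      exact h1.trans h2
    · have hk1 : 1 ≤ k := Nat.one_le_iff_ne_zero.2 h
      have hMk1 : 0 < M (k-1) := hMpos (k-1) (by omega)
      have hst := hstep (k-1) (by rwa [show k-1+2 = k+1 by omega])
      rw [show k-1+1 = k by omega] at hst
      show (if k = 0 then M 0 / s else M (k-1) * s) < (if k+1 = 0 then M 0 / s else M (k+1-1) * s)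
      simp only [if_neg h, if_neg (by omega : k+1 ≠ 0), show k+1-1 = k from rfl]
      have h1 : M (k-1) < b * M (k-1) := (lt_mul_iff_one_lt_left hMk1).2 hb1
      exact mul_lt_mul_of_pos_right (h1.trans_le hst) hs0
  have hRmono : ∀ d i, i + d ≤ N → R i ≤ R (i+d) := by
    intro d
    induction d with
    | zero => intro i _; simp
    | succ d ih =>
      intro i h
      have h1 := ih i (by omega)
      have h2 := hRlt (i+d) (by omega)
      have e : i + (d+1) = (i+d)+1 := by ring
      rw [e]; linarith
  have ivt : ∀ a b' : ℝ, a < b' → P.eval a * P.eval b' < 0 →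
      ∃ r, P.IsRoot r ∧ a < r ∧ r < b' := by
    intro a b' hab hsgn
    have hcont : ContinuousOn (fun x => P.eval x) (Set.Icc a b') :=
      (Polynomial.continuous P).continuousOn
    rcases lt_or_ge (P.eval a) 0 with ha | ha
    · have hb' : 0 < P.eval b' := stmt14_mulneg1 hsgn ha
      obtain ⟨r, hrmem, hr⟩ := intermediate_value_Ioo hab.le hcont
        (Set.mem_Ioo.2 ⟨ha, hb'⟩)
      exact ⟨r, hr, hrmem.1, hrmem.2⟩
    · have ha' : 0 < P.eval a := by
        rcases ha.lt_or_eq with h | h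
        · exact h
        · exfalso; rw [← h] at hsgn; simp at hsgn
      have hb' : P.eval b' < 0 := stmt14_mulneg2 hsgn ha
      obtain ⟨r, hrmem, hr⟩ := intermediate_value_Ioo' hab.le hcont
        (Set.mem_Ioo.2 ⟨hb', ha'⟩)
      exact ⟨r, hr, hrmem.1, hrmem.2⟩
  have hroot : ∀ k, 1 ≤ k → k ≤ N → ∃ r : ℝ, P.IsRoot r ∧ R (k-1) < |r| ∧ |r| < R k := by
    intro k hk1 hkN
    set u := R (k-1) with hu
    set v := R k with hv
    have hu0 : 0 < u := hRpos (k-1) (by omega)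
    have hv0 : 0 < v := hRpos k hkN
    have huv : u < v := by
      have := hRlt (k-1) (by omega)
      rwa [show k-1+1 = k by omega] at this
    have s1 : 0 < P.eval u * (P.coeff (k-1) * u ^ (k-1)) :=
      hsign (k-1) (by omega) u (abs_of_pos hu0)
    have s2 : 0 < P.eval v * (P.coeff k * v ^ k) := hsign k hkN v (abs_of_pos hv0)
    have s3 : 0 < P.eval (-u) * (P.coeff (k-1) * (-u) ^ (k-1)) :=
      hsign (k-1) (by omega) (-u) (by rw [abs_neg, abs_of_pos hu0])
    have s4 : 0 < P.eval (-v) * (P.coeff k * (-v) ^ k) :=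
      hsign k hkN (-v) (by rw [abs_neg, abs_of_pos hv0])
    have hck1 : P.coeff (k-1) ≠ 0 := hcoeff _ (by omega)
    have hck : P.coeff k ≠ 0 := hcoeff k hkN
    obtain ⟨m, hm⟩ : ∃ m, k = m + 1 := ⟨k-1, by omega⟩
    have hkm : k - 1 = m := by omega
    rcases lt_or_ge 0 (P.coeff (k-1) * P.coeff k) with hpos | hneg
    · have hpow : (-v:ℝ)^k * (-u)^(k-1) = -(v^k * u^(k-1)) := by
        rw [hkm, hm]
        calc (-v:ℝ)^(m+1) * (-u)^m = (-v) * (((-v)*(-u))^m) := by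
              rw [mul_pow, pow_succ]; ring
          _ = (-v) * ((v*u)^m) := by rw [neg_mul_neg]
          _ = -(v^(m+1) * u^m) := by rw [mul_pow, pow_succ]; ring
      have hmul := mul_pos s4 s3
      have hre : (P.eval (-v) * (P.coeff k * (-v)^k)) * (P.eval (-u) * (P.coeff (k-1) * (-u)^(k-1)))
          = (P.eval (-v) * P.eval (-u)) * ((P.coeff (k-1) * P.coeff k) * ((-v)^k * (-u)^(k-1))) := by
        ring
      rw [hre, hpow] at hmul
      have hfac : (P.coeff (k-1) * P.coeff k) * -(v^k * u^(k-1)) < 0 :=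
        mul_neg_of_pos_of_neg hpos
          (neg_lt_zero.2 (mul_pos (pow_pos hv0 k) (pow_pos hu0 (k-1))))
      have hprod : P.eval (-v) * P.eval (-u) < 0 := stmt14_mulpos hmul hfac
      obtain ⟨r, hr, h1, h2⟩ := ivt (-v) (-u) (by linarith) hprod
      have hrneg : r < 0 := by linarith
      refine ⟨r, hr, ?_, ?_⟩ <;> rw [abs_of_neg hrneg] <;> linarith
    · have hneg' : P.coeff (k-1) * P.coeff k < 0 :=
        lt_of_le_of_ne hneg (mul_ne_zero hck1 hck)
      have hmul := mul_pos s1 s2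
      have hre : (P.eval u * (P.coeff (k-1) * u^(k-1))) * (P.eval v * (P.coeff k * v^k))
          = (P.eval u * P.eval v) * ((P.coeff (k-1) * P.coeff k) * (u^(k-1) * v^k)) := by
        ring
      rw [hre] at hmul
      have hfac : (P.coeff (k-1) * P.coeff k) * (u^(k-1) * v^k) < 0 :=
        mul_neg_of_neg_of_pos hneg' (mul_pos (pow_pos hu0 (k-1)) (pow_pos hv0 k))
      have hprod : P.eval u * P.eval v < 0 := stmt14_mulpos hmul hfac
      obtain ⟨r, hr, h1, h2⟩ := ivt u v huv hprod
      have hrpos : 0 < r := by linarith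
      refine ⟨r, hr, ?_, ?_⟩ <;> rw [abs_of_pos hrpos] <;> linarith
  intro z hz
  by_contra him
  have hP0 : P ≠ 0 := fun h => hcoeff 0 (by omega) (by simp [h])
  set Q := P.map (algebraMap ℝ ℂ) with hQ
  have hinj : Function.Injective (algebraMap ℝ ℂ) := RingHom.injective _
  have hQ0 : Q ≠ 0 := by
    rw [hQ]; exact (Polynomial.map_ne_zero_iff hinj).2 hP0
  have hQdeg : Q.natDegree ≤ N := by
    rw [hQ, ← hdeg]; exact Polynomial.natDegree_map_le
  choose! r hr1 hr2 hr3 using hroot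
  have hrinj : ∀ k k', 1 ≤ k → k ≤ N → 1 ≤ k' → k' ≤ N → k < k' → |r k| < |r k'| := by
    intro k k' h1 h2 h3 h4 h5
    have ha := hr3 k h1 h2
    have hb := hr2 k' h3 h4
    have hmono := hRmono (k'-1-k) k (by omega)
    rw [show k + (k'-1-k) = k'-1 by omega] at hmono
    linarith
  set T : Finset ℂ := (Finset.Icc 1 N).image (fun k => ((r k : ℝ) : ℂ)) with hT
  have hinjOn : Set.InjOn (fun k : ℕ => ((r k : ℝ) : ℂ)) ↑(Finset.Icc 1 N) := by
    intro k hk k' hk' he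
    simp only [Finset.coe_Icc, Set.mem_Icc] at hk hk'
    have hre : r k = r k' := Complex.ofReal_injective (by simpa using he)
    by_contra hne
    rcases lt_or_gt_of_ne hne with h | h
    · have hlt := hrinj k k' hk.1 hk.2 hk'.1 hk'.2 h
      rw [hre] at hlt; exact lt_irrefl _ hlt
    · have hlt := hrinj k' k hk'.1 hk'.2 hk.1 hk.2 h
      rw [hre] at hlt; exact lt_irrefl _ hlt
  have hTcard : T.card = N := by
    rw [hT, Finset.card_image_of_injOn hinjOn, Nat.card_Icc]
    omega
  have hsub : insert z T ⊆ Q.roots.toFinset := by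
    intro x hx
    rw [Multiset.mem_toFinset, Polynomial.mem_roots']
    refine ⟨hQ0, ?_⟩
    rcases Finset.mem_insert.1 hx with h | h
    · subst h; exact hz
    · obtain ⟨k, hk, he⟩ := Finset.mem_image.1 h
      simp only [Finset.mem_Icc] at hk
      rw [← he]
      exact (hr1 k hk.1 hk.2).map (f := algebraMap ℝ ℂ)
  have hzT : z ∉ T := by
    intro hmem
    obtain ⟨k, _, he⟩ := Finset.mem_image.1 hmem
    apply him
    rw [← he]
    simp
  have hcard : (insert z T).card = N + 1 := by
    rw [Finset.card_insert_of_notMem hzT, hTcard]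
  have hle : (insert z T).card ≤ Q.roots.toFinset.card := Finset.card_le_card hsub
  have hfin := (Multiset.toFinset_card_le Q.roots).trans
    ((Polynomial.card_roots' Q).trans hQdeg)
  omega
end

section
/- For every positive integer n and every ε > 0 there exists a polynomial P of degree 2n+1 with all coefficients real and nonzero, such that |q_k(P)| > b_{2n} - ε for all k = 2, 3, …, 2n+1, and P has a nonreal root. -/
open Polynomial Finset

private lemma step_ineq (r x : ℝ) (Q : Polynomial ℝ)
    (h : eval x Q * eval x (derivative (derivative Q)) ≤ eval x (derivative Q) ^ 2) :
    eval x ((X - C r) * Q) * eval x (derivative (derivative ((X - C r) * Q)))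
      ≤ eval x (derivative ((X - C r) * Q)) ^ 2 := by
  have hd1 : derivative ((X - C r) * Q) = Q + (X - C r) * derivative Q := by
    simp [derivative_mul]
  have hd2 : derivative (derivative ((X - C r) * Q))
      = derivative Q + (derivative Q + (X - C r) * derivative (derivative Q)) := by
    rw [hd1]
    simp [derivative_mul]
  rw [hd2, hd1]
  simp only [eval_add, eval_mul, eval_sub, eval_X, eval_C]
  nlinarith [sq_nonneg (eval x Q), sq_nonneg (x - r),
    mul_nonneg (sq_nonneg (x - r)) (sub_nonneg.2 h)]

private lemma lag_aux (m : Multiset ℝ) : ∀ (a x : ℝ),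
    eval x (C a * (m.map fun r => X - C r).prod) *
      eval x (derivative (derivative (C a * (m.map fun r => X - C r).prod))) ≤
    eval x (derivative (C a * (m.map fun r => X - C r).prod)) ^ 2 := by
  induction m using Multiset.induction_on with
  | empty => intro a x; simp
  | cons r s ih =>
    intro a x
    have hrw : C a * ((r ::ₘ s).map fun r => X - C r).prod
        = (X - C r) * (C a * (s.map fun r => X - C r).prod) := by
      rw [Multiset.map_cons, Multiset.prod_cons]; ring
    rw [hrw]
    exact step_ineq r x _ (ih a x)

private lemma laguerre (P : Polynomial ℝ)
    (h : ∀ z : ℂ, (P.map (algebraMap ℝ ℂ)).IsRoot z → z.im = 0) (x : ℝ) :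
    eval x P * eval x (derivative (derivative P)) ≤ eval x (derivative P) ^ 2 := by
  set Pc := P.map (algebraMap ℝ ℂ) with hPc
  have hsp : Pc.Splits :=
    IsAlgClosed.splits Pc
  have hfac : Pc = C Pc.leadingCoeff * (Pc.roots.map fun a => X - C a).prod :=
    Splits.eq_prod_roots hsp
  set m : Multiset ℝ := Pc.roots.map Complex.re with hm
  have key : P = C P.leadingCoeff * (m.map fun r => X - C r).prod := by
    apply Polynomial.map_injective (algebraMap ℝ ℂ) (algebraMap ℝ ℂ).injective
    rw [Polynomial.map_mul, Polynomial.map_C, ← hPc, hfac]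
    congr 1
    · rw [Polynomial.leadingCoeff_map_of_injective (algebraMap ℝ ℂ).injective]
    · rw [Polynomial.map_multiset_prod, hm, Multiset.map_map, Multiset.map_map]
      apply congrArg Multiset.prod
      symm
      apply Multiset.map_congr rfl
      intro z hz
      have him : z.im = 0 := h z (isRoot_of_mem_roots hz)
      simp only [Function.comp_apply, Polynomial.map_sub, Polynomial.map_X, Polynomial.map_C]
      congr 1
      exact congrArg C (Complex.ext rfl him.symm)
  conv_lhs => rw [key]
  conv_rhs => rw [key]
  exact lag_aux m P.leadingCoeff x

private lemma expo (n k : ℕ) : ((n - k) + (k - n))^2 + 2*n*k = k^2 + n^2 := by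
  rcases le_total k n with h | h
  · obtain ⟨m, rfl⟩ := Nat.exists_eq_add_of_le h
    have h1 : k - (k + m) = 0 := by omega
    have h2 : k + m - k = m := by omega
    rw [h1, h2]
    ring
  · obtain ⟨m, rfl⟩ := Nat.exists_eq_add_of_le h
    have h1 : n - (n + m) = 0 := by omega
    have h2 : n + m - n = m := by omega
    rw [h1, h2]
    ring

private lemma master (n : ℕ) (t : ℝ) (w : ℕ → ℝ) :
    ∑ k ∈ range (2*n+2), (if k = n then (-1:ℝ) else 1) * w k * t ^ (((n - k) + (k - n))^2)
      = -(w n) + (∑ j ∈ Icc 1 n, (w (n - j) + w (n + j)) * t ^ (j^2))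
        + w (2*n+1) * t ^ ((n+1)^2) := by
  have hsplit : range (2*n+2) = (range n ∪ {n}) ∪ Icc (n+1) (2*n+1) := by
    ext k; simp [Finset.mem_Icc, Finset.mem_range]; omega
  have hd1 : Disjoint (range n : Finset ℕ) {n} := by
    rw [Finset.disjoint_left]; intro k hk hk'; simp at hk hk'; omega
  have hd2 : Disjoint ((range n ∪ {n}) : Finset ℕ) (Icc (n+1) (2*n+1)) := by
    rw [Finset.disjoint_left]; intro k hk hk'; simp at hk hk'; omega
  rw [hsplit, sum_union hd2, sum_union hd1, sum_singleton]
  have h1 : ∑ k ∈ range n, (if k = n then (-1:ℝ) else 1) * w k * t ^ (((n - k) + (k - n))^2)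
      = ∑ j ∈ Icc 1 n, w (n - j) * t ^ (j^2) := by
    apply Finset.sum_nbij' (i := fun k => n - k) (j := fun j => n - j)
    · intro k hk; simp at hk ⊢; omega
    · intro j hj; simp at hj ⊢; omega
    · intro k hk; simp at hk; omega
    · intro j hj; simp at hj; omega
    · intro k hk
      simp only [Finset.mem_range] at hk
      have h0 : k ≠ n := by omega
      have h1 : k - n = 0 := by omega
      have h2 : n - (n - k) = k := by omega
      rw [if_neg h0, h1, h2, Nat.add_zero, one_mul]
  have h2 : ∑ k ∈ Icc (n+1) (2*n+1),
        (if k = n then (-1:ℝ) else 1) * w k * t ^ (((n - k) + (k - n))^2)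
      = ∑ j ∈ Icc 1 (n+1), w (n + j) * t ^ (j^2) := by
    apply Finset.sum_nbij' (i := fun k => k - n) (j := fun j => n + j)
    · intro k hk; simp at hk ⊢; omega
    · intro j hj; simp at hj ⊢; omega
    · intro k hk; simp at hk; omega
    · intro j hj; simp at hj; omega
    · intro k hk
      simp only [Finset.mem_Icc] at hk
      have h0 : k ≠ n := by omega
      have h1 : n - k = 0 := by omega
      have h2 : n + (k - n) = k := by omega
      rw [if_neg h0, h1, h2, Nat.zero_add, one_mul]
  rw [h1, h2, Finset.sum_Icc_succ_top (by omega : 1 ≤ n + 1)]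
  have h3 : ∑ j ∈ Icc 1 n, (w (n - j) + w (n + j)) * t ^ (j^2)
      = (∑ j ∈ Icc 1 n, w (n - j) * t ^ (j^2)) + ∑ j ∈ Icc 1 n, w (n + j) * t ^ (j^2) := by
    rw [← Finset.sum_add_distrib]
    apply Finset.sum_congr rfl
    intro j hj; ring
  rw [h3]
  have h4 : n + (n + 1) = 2*n+1 := by omega
  rw [h4]
  simp only [if_pos rfl, Nat.sub_self, Nat.add_zero, pow_zero, mul_one, ite_true, eq_self_iff_true]
  ring

private lemma numeric15 (n : ℕ) (hn : 1 ≤ n) : ((2*n+1)^2 : ℕ) < 2^(3*n+1) := by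
  induction n, hn using Nat.le_induction with
  | base => norm_num
  | succ n hn ih =>
    have h8 : (2:ℕ)^(3*(n+1)+1) = 8 * 2^(3*n+1) := by
      rw [show 3*(n+1)+1 = (3*n+1)+3 by omega, pow_add]; ring
    rw [h8]
    nlinarith [ih]

set_option maxHeartbeats 1600000 in
/-- For every positive integer `n` and `ε > 0` there exists a real polynomial of degree
`2n+1` with nonzero coefficients, with `|q_k(P)| > b_{2n} - ε` for all `k = 2, …, 2n+1`,
having a nonreal root. -/
theorem stmt_15 (n : ℕ) (hn : 0 < n) (b : ℝ)
    (hb : 1 < b ∧ 1 - 2 * ∑ k ∈ Finset.Icc 1 n, b ^ (-(k : ℝ) ^ 2 / 2) = 0)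
    (ε : ℝ) (hε : 0 < ε) :
    ∃ P : Polynomial ℝ, P.natDegree = 2 * n + 1 ∧
      (∀ k, k ≤ 2 * n + 1 → P.coeff k ≠ 0) ∧
      (∀ k, 2 ≤ k → k ≤ 2 * n + 1 →
        b - ε < |(P.coeff (k - 1)) ^ 2 / (P.coeff (k - 2) * P.coeff k)|) ∧
      (∃ z : ℂ, (P.map (algebraMap ℝ ℂ)).IsRoot z ∧ z.im ≠ 0) := by
  obtain ⟨hb1, hb2⟩ := hb
  have hb0 : (0:ℝ) < b := by linarith
  set t : ℝ := b ^ (-(1:ℝ)/2) with htdef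
  have ht0 : 0 < t := Real.rpow_pos_of_pos hb0 _
  have htne : t ≠ 0 := ne_of_gt ht0
  have hterm : ∀ k : ℕ, b ^ (-(k:ℝ)^2/2) = t ^ (k^2) := by
    intro k
    rw [htdef, ← Real.rpow_natCast (b ^ (-(1:ℝ)/2)) (k^2), ← Real.rpow_mul hb0.le]
    congr 1
    push_cast
    ring
  have H : ∑ j ∈ Finset.Icc 1 n, t ^ (j^2) = 1/2 := by
    have h := Finset.sum_congr rfl (fun k (_ : k ∈ Finset.Icc 1 n) => hterm k)
    rw [h] at hb2
    linarith
  have ht_half : t ≤ 1/2 := by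
    have h1 : t ^ (1^2) ≤ ∑ j ∈ Finset.Icc 1 n, t ^ (j^2) :=
      Finset.single_le_sum (f := fun j => t ^ (j^2)) (fun i _ => (pow_pos ht0 _).le)
        (Finset.mem_Icc.mpr ⟨le_refl 1, hn⟩)
    rw [H] at h1
    simpa using h1
  have htb : t^2 = b⁻¹ := by
    rw [htdef, ← Real.rpow_natCast (b ^ (-(1:ℝ)/2)) 2, ← Real.rpow_mul hb0.le]
    norm_num [Real.rpow_neg_one]
  set a : ℕ → ℝ := fun k => (if k = n then (-1:ℝ) else 1) * t ^ (k^2) with hadef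
  have ha_ne : ∀ k, a k ≠ 0 := by
    intro k
    have hp := pow_pos ht0 (k^2)
    rw [hadef]
    dsimp only
    split
    · nlinarith
    · nlinarith
  have habs : ∀ k, |a k| = t ^ (k^2) := by
    intro k
    rw [hadef]
    dsimp only
    rw [abs_mul]
    split
    · rw [abs_of_nonneg (pow_pos ht0 _).le]; norm_num
    · rw [abs_of_nonneg (pow_pos ht0 _).le]; norm_num
  set P : Polynomial ℝ := ∑ k ∈ Finset.range (2*n+2), Polynomial.monomial k (a k) with hPdef
  have hcoeff : ∀ j, P.coeff j = if j < 2*n+2 then a j else 0 := by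
    intro j
    rw [hPdef, Polynomial.finset_sum_coeff]
    simp only [Polynomial.coeff_monomial]
    rw [Finset.sum_ite_eq' (Finset.range (2*n+2)) j a]
    simp [Finset.mem_range]
  have hdeg : P.natDegree = 2*n+1 := by
    apply le_antisymm
    · apply Polynomial.natDegree_le_iff_coeff_eq_zero.mpr
      intro N hN
      rw [hcoeff, if_neg (by omega)]
    · apply Polynomial.le_natDegree_of_ne_zero
      rw [hcoeff, if_pos (by omega)]
      exact ha_ne _
  have hquot : ∀ k, 2 ≤ k → k ≤ 2*n+1 →
      b - ε < |(P.coeff (k-1))^2 / (P.coeff (k-2) * P.coeff k)| := by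
    intro k hk2 hk
    obtain ⟨m, rfl⟩ := Nat.exists_eq_add_of_le hk2
    have e1 : 2 + m - 1 = m + 1 := by omega
    have e2 : 2 + m - 2 = m := by omega
    rw [e1, e2, hcoeff, hcoeff, hcoeff, if_pos (by omega), if_pos (by omega), if_pos (by omega)]
    have hval : |(a (m+1))^2 / (a m * a (2+m))| = b := by
      rw [abs_div, abs_mul, abs_pow, habs, habs, habs, ← pow_mul, ← pow_add]
      have hden : m^2 + (2+m)^2 = (m+1)^2*2 + 2 := by ring
      rw [hden, pow_add, htb]
      have h1 : (0:ℝ) < t^((m+1)^2*2) := pow_pos ht0 _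
      have hbne : b ≠ 0 := ne_of_gt hb0
      field_simp
    rw [hval]
    linarith
  set x₀ : ℝ := (t ^ (2*n))⁻¹ with hx₀
  have hx₀pos : 0 < x₀ := inv_pos.mpr (pow_pos ht0 _)
  have core : ∀ k, t ^ (k^2) * x₀ ^ k * t ^ (n^2) = t ^ (((n-k)+(k-n))^2) := by
    intro k
    rw [hx₀, inv_pow, ← pow_mul]
    have h2 : t ^ (2*n*k) ≠ 0 := pow_ne_zero _ htne
    field_simp
    rw [← pow_add, ← pow_add]
    congr 1
    have h := expo n k
    zify at h ⊢
    linarith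
  have hevalP : Polynomial.eval x₀ P = ∑ k ∈ Finset.range (2*n+2), a k * x₀ ^ k := by
    rw [hPdef, Polynomial.eval_finset_sum]
    simp [Polynomial.eval_monomial]
  have hevalP' : Polynomial.eval x₀ (Polynomial.derivative P)
      = ∑ k ∈ Finset.range (2*n+2), a k * k * x₀ ^ (k-1) := by
    rw [hPdef, Polynomial.derivative_sum, Polynomial.eval_finset_sum]
    apply Finset.sum_congr rfl
    intro k _
    rw [Polynomial.derivative_monomial, Polynomial.eval_monomial]
  have hevalP'' : Polynomial.eval x₀ (Polynomial.derivative (Polynomial.derivative P))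
      = ∑ k ∈ Finset.range (2*n+2), a k * k * ((k-1 : ℕ) : ℝ) * x₀ ^ (k-1-1) := by
    rw [hPdef, Polynomial.derivative_sum, Polynomial.derivative_sum, Polynomial.eval_finset_sum]
    apply Finset.sum_congr rfl
    intro k _
    rw [Polynomial.derivative_monomial, Polynomial.derivative_monomial, Polynomial.eval_monomial]
  have clA : Polynomial.eval x₀ P * t ^ (n^2) = t ^ ((n+1)^2) := by
    rw [hevalP, Finset.sum_mul]
    have hc : ∀ k ∈ Finset.range (2*n+2),
        a k * x₀ ^ k * t ^ (n^2)
          = (if k = n then (-1:ℝ) else 1) * (fun _ : ℕ => (1:ℝ)) k * t ^ (((n-k)+(k-n))^2) := by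
      intro k _
      rw [hadef]
      dsimp only
      have hcore := core k
      linear_combination ((if k = n then (-1:ℝ) else 1)) * hcore
    rw [Finset.sum_congr rfl hc, master n t (fun _ => 1)]
    have hs : ∑ j ∈ Finset.Icc 1 n, ((1:ℝ)+1) * t ^ (j^2) = 1 := by
      rw [← Finset.mul_sum, H]; norm_num
    rw [hs]
    ring
  have clB : Polynomial.eval x₀ (Polynomial.derivative P) * x₀ * t ^ (n^2)
      = (2*(n:ℝ)+1) * t ^ ((n+1)^2) := by
    rw [hevalP', Finset.sum_mul, Finset.sum_mul]
    have hc : ∀ k ∈ Finset.range (2*n+2),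
        a k * k * x₀ ^ (k-1) * x₀ * t ^ (n^2)
          = (if k = n then (-1:ℝ) else 1) * (fun k : ℕ => (k:ℝ)) k * t ^ (((n-k)+(k-n))^2) := by
      intro k _
      dsimp only
      match k with
      | 0 => simp
      | (m+1) =>
        rw [Nat.add_sub_cancel, hadef]
        dsimp only
        have hcore := core (m+1)
        push_cast
        linear_combination ((if m+1 = n then (-1:ℝ) else 1) * ((m:ℝ)+1)) * hcore
    rw [Finset.sum_congr rfl hc, master n t (fun k : ℕ => (k:ℝ))]
    have hs : ∑ j ∈ Finset.Icc 1 n, (((n - j : ℕ):ℝ) + ((n + j : ℕ):ℝ)) * t ^ (j^2) = (n:ℝ) := by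
      have hc2 : ∀ j ∈ Finset.Icc 1 n,
          (((n - j : ℕ):ℝ) + ((n + j : ℕ):ℝ)) * t ^ (j^2) = (2*(n:ℝ)) * t ^ (j^2) := by
        intro j hj
        simp only [Finset.mem_Icc] at hj
        rw [Nat.cast_sub hj.2]
        push_cast
        ring
      rw [Finset.sum_congr rfl hc2, ← Finset.mul_sum, H]
      ring
    rw [hs]
    push_cast
    ring
  have clC : Polynomial.eval x₀ (Polynomial.derivative (Polynomial.derivative P)) * x₀^2 * t ^ (n^2)
      = 2 * (∑ j ∈ Finset.Icc 1 n, (j:ℝ)^2 * t ^ (j^2)) + 2*(n:ℝ)*(2*(n:ℝ)+1) * t ^ ((n+1)^2) := by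
    rw [hevalP'', Finset.sum_mul, Finset.sum_mul]
    have hc : ∀ k ∈ Finset.range (2*n+2),
        a k * k * ((k-1 : ℕ):ℝ) * x₀ ^ (k-1-1) * x₀^2 * t ^ (n^2)
          = (if k = n then (-1:ℝ) else 1) * (fun k : ℕ => (k:ℝ) * ((k:ℝ)-1)) k * t ^ (((n-k)+(k-n))^2) := by
      intro k _
      dsimp only
      match k with
      | 0 => simp
      | 1 => norm_num
      | (m+2) =>
        have h1 : m+2-1-1 = m := by omega
        have h2 : m+2-1 = m+1 := by omega
        rw [h1, h2, hadef]
        dsimp only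
        have hcore := core (m+2)
        push_cast
        linear_combination ((if m+2 = n then (-1:ℝ) else 1) * ((m:ℝ)+2) * ((m:ℝ)+1)) * hcore
    rw [Finset.sum_congr rfl hc, master n t (fun k : ℕ => (k:ℝ) * ((k:ℝ)-1))]
    have hs : ∑ j ∈ Finset.Icc 1 n,
        ((((n - j : ℕ):ℝ) * (((n - j : ℕ):ℝ)-1)) + (((n + j : ℕ):ℝ) * (((n + j : ℕ):ℝ)-1))) * t ^ (j^2)
        = ((n:ℝ)^2 - (n:ℝ)) + 2 * ∑ j ∈ Finset.Icc 1 n, (j:ℝ)^2 * t ^ (j^2) := by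
      have hc2 : ∀ j ∈ Finset.Icc 1 n,
          ((((n - j : ℕ):ℝ) * (((n - j : ℕ):ℝ)-1)) + (((n + j : ℕ):ℝ) * (((n + j : ℕ):ℝ)-1))) * t ^ (j^2)
            = (2*(n:ℝ)^2 - 2*(n:ℝ)) * t ^ (j^2) + 2 * ((j:ℝ)^2 * t ^ (j^2)) := by
        intro j hj
        simp only [Finset.mem_Icc] at hj
        rw [Nat.cast_sub hj.2]
        push_cast
        ring
      rw [Finset.sum_congr rfl hc2, Finset.sum_add_distrib, ← Finset.mul_sum, ← Finset.mul_sum, H]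
      ring
    rw [hs]
    push_cast
    ring
  refine ⟨P, hdeg, ?_, hquot, ?_⟩
  · intro k hk
    rw [hcoeff, if_pos (by omega)]
    exact ha_ne k
  · by_contra hcon
    push_neg at hcon
    have hL := laguerre P (fun z hz => hcon z hz) x₀
    have hnum : ((2*(n:ℝ)+1))^2 * t ^ (n^2 + 2*n) < 2 := by
      have hN : ((2*n+1)^2 : ℕ) < 2^(3*n+1) := numeric15 n hn
      have hNr : ((2*(n:ℝ)+1))^2 < 2^(3*n+1) := by exact_mod_cast hN
      have h1 : t ^ (n^2+2*n) ≤ (1/2 : ℝ) ^ (n^2+2*n) := pow_le_pow_left₀ ht0.le ht_half _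
      have h2 : ((1:ℝ)/2) ^ (n^2+2*n) ≤ (1/2 : ℝ) ^ (3*n) := by
        apply pow_le_pow_of_le_one (by norm_num) (by norm_num)
        nlinarith [hn]
      have h3 : (0:ℝ) < 2 ^ (3*n) := by positivity
      have h4 : (2:ℝ)^(3*n+1) = 2 * 2^(3*n) := by rw [pow_succ]; ring
      have h6 : ((1:ℝ)/2)^(3*n) * 2^(3*n) = 1 := by
        rw [div_pow, one_pow]
        field_simp
      have h7 : (0:ℝ) < ((1:ℝ)/2)^(3*n) := by positivity
      calc ((2*(n:ℝ)+1))^2 * t ^ (n^2 + 2*n)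
          ≤ ((2*(n:ℝ)+1))^2 * ((1/2:ℝ) ^ (3*n)) := by
            apply mul_le_mul_of_nonneg_left (le_trans h1 h2) (by positivity)
        _ < 2 := by
            have h8 : ((2*(n:ℝ)+1))^2 * ((1/2:ℝ)^(3*n)) < (2 * 2^(3*n)) * ((1/2:ℝ)^(3*n)) := by
              apply mul_lt_mul_of_pos_right _ h7
              rw [← h4]; exact hNr
            have h9 : (2 * (2:ℝ)^(3*n)) * ((1/2:ℝ)^(3*n)) = 2 := by linear_combination 2*h6
            linarith
    have hSj : t ≤ ∑ j ∈ Finset.Icc 1 n, (j:ℝ)^2 * t ^ (j^2) := by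
      have h1 := Finset.single_le_sum (f := fun j : ℕ => (j:ℝ)^2 * t ^ (j^2))
        (fun i _ => by positivity) (Finset.mem_Icc.mpr ⟨le_refl 1, hn⟩)
      simpa using h1
    set S := ∑ j ∈ Finset.Icc 1 n, (j:ℝ)^2 * t ^ (j^2) with hS
    have key : ((2*(n:ℝ)+1) * t ^ ((n+1)^2))^2
        < t ^ ((n+1)^2) * (2*S + 2*(n:ℝ)*(2*(n:ℝ)+1) * t^((n+1)^2)) := by
      have lhs_eq : ((2*(n:ℝ)+1) * t ^ ((n+1)^2))^2
          = ((2*(n:ℝ)+1))^2 * t^(n^2+2*n) * t^((n+1)^2+1) := by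
        rw [mul_pow, ← pow_mul, show (n+1)^2*2 = (n^2+2*n) + ((n+1)^2 + 1) by ring, pow_add]
        ring
      have rhs_ge : 2 * t^((n+1)^2+1) ≤ t ^ ((n+1)^2) * (2*S + 2*(n:ℝ)*(2*(n:ℝ)+1)*t^((n+1)^2)) := by
        have hpos : (0:ℝ) ≤ 2*(n:ℝ)*(2*(n:ℝ)+1)*t^((n+1)^2) := by positivity
        have h1 : 2*t ≤ 2*S + 2*(n:ℝ)*(2*(n:ℝ)+1)*t^((n+1)^2) := by nlinarith [hSj]
        calc 2 * t^((n+1)^2+1) = t^((n+1)^2) * (2*t) := by rw [pow_succ]; ring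
          _ ≤ t ^ ((n+1)^2) * (2*S + 2*(n:ℝ)*(2*(n:ℝ)+1)*t^((n+1)^2)) :=
              mul_le_mul_of_nonneg_left h1 (pow_pos ht0 _).le
      have hlt : ((2*(n:ℝ)+1))^2 * t^(n^2+2*n) * t^((n+1)^2+1) < 2 * t^((n+1)^2+1) :=
        mul_lt_mul_of_pos_right hnum (pow_pos ht0 _)
      rw [lhs_eq]
      linarith
    have c0 : (0:ℝ) ≤ x₀^2 * (t^(n^2) * t^(n^2)) := by positivity
    have L2 : t ^ ((n+1)^2) * (2*S + 2*(n:ℝ)*(2*(n:ℝ)+1) * t^((n+1)^2))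
        ≤ ((2*(n:ℝ)+1) * t ^ ((n+1)^2))^2 := by
      have h1 : Polynomial.eval x₀ P * Polynomial.eval x₀ (Polynomial.derivative (Polynomial.derivative P)) * (x₀^2 * (t^(n^2) * t^(n^2)))
          ≤ Polynomial.eval x₀ (Polynomial.derivative P)^2 * (x₀^2 * (t^(n^2) * t^(n^2))) :=
        mul_le_mul_of_nonneg_right hL c0
      calc t ^ ((n+1)^2) * (2*S + 2*(n:ℝ)*(2*(n:ℝ)+1) * t^((n+1)^2))
          = (Polynomial.eval x₀ P * t^(n^2)) *
            (Polynomial.eval x₀ (Polynomial.derivative (Polynomial.derivative P)) * x₀^2 * t^(n^2)) := by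
            rw [clA, clC]
        _ = Polynomial.eval x₀ P * Polynomial.eval x₀ (Polynomial.derivative (Polynomial.derivative P)) * (x₀^2 * (t^(n^2) * t^(n^2))) := by
            ring
        _ ≤ Polynomial.eval x₀ (Polynomial.derivative P)^2 * (x₀^2 * (t^(n^2) * t^(n^2))) := h1
        _ = (Polynomial.eval x₀ (Polynomial.derivative P) * x₀ * t^(n^2))^2 := by ring
        _ = ((2*(n:ℝ)+1) * t ^ ((n+1)^2))^2 := by rw [clB]
    linarith
end

section
/- Let P(z) = a_0 + a_1 z + a_2 z² + a_3 z³ be a polynomial of degree 3 with a_k ∈ ℝ \ {0} for k = 0,1,2,3. If |q_2(P)| ≥ √(9 + 6√3) and |q_3(P)| ≥ √(9 + 6√3), then all zeros of P are real. -/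
set_option maxHeartbeats 1000000 in
lemma core_lemma (w c t u : ℝ) (hw2 : w^2 = 3) (hwpos : 0 < w)
    (hc2 : c^2 = 9 + 6*w) (hcpos : 0 < c) (hu : u ≠ 0)
    (hA : u^2 + 2*u - 3 < 4*t) (hB : c^2*t^2 ≤ u^4)
    (hD : c^2*(t-u+1)^2*u^2 ≤ t^4) : False := by
  have hw173 : 173/100 < w := by
    by_contra h
    push_neg at h
    linarith only [hw2, h, mul_nonneg (by linarith only [h] : (0:ℝ) ≤ 173/100 - w) hwpos.le]
  have hw174 : w < 174/100 := by
    linarith only [hw2, sq_nonneg (w - 174/100)]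
  have hc44 : 44/10 < c := by
    by_contra h
    push_neg at h
    linarith only [hc2, hw173, h,
      mul_nonneg (by linarith only [h] : (0:ℝ) ≤ 44/10 - c) hcpos.le]
  have hc441 : c < 441/100 := by
    linarith only [hc2, hw174, sq_nonneg (c - 441/100)]
  have hwc1 : 761/100 < w*c := by
    linarith only [mul_pos (sub_pos.2 hw173) (sub_pos.2 hc44), hw173, hc44]
  have hwc2 : w*c < 768/100 := by
    linarith only [mul_pos (sub_pos.2 hw174) (sub_pos.2 hc44), hw174, hc44, hc441]
  have hB1 : c*t ≤ u^2 := by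
    by_contra h
    push_neg at h
    linarith only [mul_self_lt_mul_self (sq_nonneg u) h, hB]
  have hB2 : -(u^2) ≤ c*t := by
    by_contra h
    push_neg at h
    linarith only [mul_self_lt_mul_self (sq_nonneg u) (by linarith only [h] : u^2 < -(c*t)), hB]
  have hP2 : c*(u^2+2*u-3) < 4*u^2 := by
    linarith only [mul_lt_mul_of_pos_left hA hcpos, hB1]
  have hK1 : 59*((4+c)*u^2+2*c*u-3*c)
      = (4+c)*(u - ((1+w)*c-6-3*w))*(59*u - 12 + 15*w + (3+11*w)*c) := by
    linear_combination ((-18) + (3)*c + (-16)*w + (14)*w*c + (26)*w^2 + (11)*w^2*c + (56)*u + (48)*u*w) * hc2 + ((-42) + (66)*c + (156)*w + (66)*w*c + (288)*u) * hw2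
  rcases hu.lt_or_gt with hun | hup
  · -- u < 0
    have hq : 0 ≤ t^2 + c*u*t - c*u^2 + c*u := by
      by_contra h
      push_neg at h
      have h2 : t^2 < -(c*(t-u+1)*u) := by linarith only [h]
      linarith only [mul_self_lt_mul_self (sq_nonneg t) h2, hD]
    have hK5 : 59*((c-4)*u^2+2*c*u-3*c)
        = (c-4)*(u + ((1+w)*c+6+3*w))*(59*u - 12 + 15*w - (3+11*w)*c) := by
      linear_combination ((18) + (3)*c + (16)*w + (14)*w*c + (-26)*w^2 + (11)*w^2*c + (-56)*u + (-48)*u*w) * hc2 + ((42) + (66)*c + (-156)*w + (66)*w*c + (-288)*u) * hw2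
    have hf2neg : 59*u - 12 + 15*w - (3+11*w)*c < 0 := by
      linarith only [hun, hw174, hc44, hwc1]
    have hgr : 0 < u + ((1+w)*c+6+3*w) := by
      by_contra h
      push_neg at h
      linarith only [hK5, hP2, mul_nonneg (mul_nonneg (by linarith only [hc44] : (0:ℝ) ≤ c-4)
        (by linarith only [h] : (0:ℝ) ≤ -(u + ((1+w)*c+6+3*w))))
        (by linarith only [hf2neg] : (0:ℝ) ≤ -(59*u - 12 + 15*w - (3+11*w)*c))]
    rcases le_or_gt (2*t + c*u) 0 with hv | hv
    · rcases le_or_gt 0 ((4+c)*u^2+2*c*u-3*c) with hP1 | hP1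
      · -- L4 branch
        have hτ : u^2 + (2+2*c)*u - 3 < 0 := by linarith only [hA, hv]
        have hustar : u - ((1+w)*c-6-3*w) < 0 := by
          linarith only [hun, hwc1, hc44, hw174]
        have hum : 59*u - 12 + 15*w + (3+11*w)*c ≤ 0 := by
          by_contra h
          push_neg at h
          linarith only [hK1, hP1, mul_pos (by linarith only [hc44] : (0:ℝ) < 4+c)
            (mul_pos (by linarith only [hustar] : (0:ℝ) < ((1+w)*c-6-3*w) - u) h)]
        have hm2 : u - (3*w+w*c-3*c) < 0 := by
          linarith only [hum, hw173, hw174, hc44, hc441, hwc1, hwc2]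
        have hK6 : u^2+(6+4*c)*u+9 = (u + ((1+w)*c+6+3*w))*(u - (3*w+w*c-3*c)) := by
          linear_combination ((-3) + (-2)*w + (1)*w^2) * hc2 + ((6) + (6)*c + (6)*w) * hw2
        have hquad : u^2+(6+4*c)*u+9 < 0 := by
          linarith only [hK6, mul_pos hgr (by linarith only [hm2] : (0:ℝ) < (3*w+w*c-3*c) - u)]
        have key : (4*t - (u^2+2*u-3))*(4*t + (u^2+2*u-3) + 4*c*u)
            = 16*(t^2 + c*u*t - c*u^2 + c*u) - (u-1)^2*(u^2+(6+4*c)*u+9) := by ring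
        have hf1 : 0 < 4*t - (u^2+2*u-3) := by linarith only [hA]
        have hf2' : 0 < -(4*t + (u^2+2*u-3) + 4*c*u) := by linarith only [hv, hτ]
        linarith only [key, mul_pos hf1 hf2', hq,
          mul_nonneg (sq_nonneg (u-1)) (by linarith only [hquad] : (0:ℝ) ≤ -(u^2+(6+4*c)*u+9))]
      · -- L5 branch
        have hustar : u - ((1+w)*c-6-3*w) < 0 := by
          linarith only [hun, hwc1, hc44, hw174]
        have humin : 0 < 59*u - 12 + 15*w + (3+11*w)*c := by
          by_contra h
          push_neg at h
          linarith only [hK1, hP1, mul_nonneg (mul_nonneg (by linarith only [hc44] : (0:ℝ) ≤ 4+c)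
            (by linarith only [hustar] : (0:ℝ) ≤ ((1+w)*c-6-3*w) - u))
            (by linarith only [h] : (0:ℝ) ≤ -(59*u - 12 + 15*w + (3+11*w)*c))]
        have hcu : 0 < u + c := by linarith only [humin, hwc2, hc44, hw174]
        have hquadpos : 0 < u^2 - (c^2+c)*u + c^2 := by
          have h1 : 0 < (c^2+c)*(-u) := mul_pos (by positivity) (by linarith only [hun])
          linarith only [h1, sq_nonneg u, sq_nonneg c]
        have hg5 : 0 < u^3 - c^2*u^2 - c^3*u + c^3 := by
          linarith only [mul_pos hcu hquadpos]
        have hI5 : (c*t+u^2)*(c*t - u^2 + c^2*u)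
            = c^2*(t^2+c*u*t-c*u^2+c*u) - u*(u^3-c^2*u^2-c^3*u+c^3) := by ring
        have p2 : 0 < u^2 - c^2*u - c*t := by
          linarith only [hB1, mul_pos (by positivity : (0:ℝ) < c^2) (by linarith only [hun] : (0:ℝ) < -u)]
        linarith only [hI5, mul_nonneg (by linarith only [hB2] : (0:ℝ) ≤ c*t+u^2) p2.le,
          mul_nonneg (sq_nonneg c) hq, mul_pos (by linarith only [hun] : (0:ℝ) < -u) hg5]
    · -- above vertex
      have hK4 : 4*(u^3+c^2*u^2-c^3*u+c^3)
          = (u + ((1+w)*c+6+3*w))*(2*u - ((1+w)*c-3-3*w))^2 := by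
        linear_combination ((3)*c + (3)*w + (-3)*w*c + (6)*w^2 + (-3)*w^2*c + (3)*w^3 + (-1)*w^3*c + (3)*u + (-4)*u*c + (6)*u*w + (3)*u*w^2 + (4)*u^2) * hc2 + ((18) + (-18)*c + (36)*w + (-18)*w*c + (18)*w^2 + (-6)*w^2*c + (18)*u + (6)*u*c + (18)*u*w) * hw2
      have hsqf : 0 < ((1+w)*c-3-3*w) - 2*u := by
        linarith only [hun, hwc1, hc44, hw174]
      have hg : 0 < u^3+c^2*u^2-c^3*u+c^3 := by
        linarith only [hK4, mul_pos hgr (mul_pos hsqf hsqf)]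
      have hI3 : (u^2 - c*t)*(u^2 + c*t + c^2*u)
          = u*(u^3+c^2*u^2-c^3*u+c^3) - c^2*(t^2+c*u*t-c*u^2+c*u) := by ring
      have hcv : 0 < 2*c*t + c^2*u := by
        linarith only [mul_pos hcpos hv]
      have p2 : 0 < u^2 + c*t + c^2*u := by linarith only [hB1, hcv]
      linarith only [hI3, mul_nonneg (by linarith only [hB1] : (0:ℝ) ≤ u^2 - c*t) p2.le,
        mul_pos (by linarith only [hun] : (0:ℝ) < -u) hg, mul_nonneg (sq_nonneg c) hq]
  · -- u > 0
    have hq : 0 ≤ t^2 - c*u*t + c*u^2 - c*u := by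
      by_contra h
      push_neg at h
      have h2 : t^2 < c*(t-u+1)*u := by linarith only [h]
      linarith only [mul_self_lt_mul_self (sq_nonneg t) h2, hD]
    have hu32 : u ≤ 3/2 := by
      by_contra h
      push_neg at h
      linarith only [hP2, mul_nonneg (by linarith only [h] : (0:ℝ) ≤ u - 3/2) hcpos.le,
        mul_pos (by linarith only [hc44] : (0:ℝ) < c-4) (mul_pos hup hup)]
    have htv : 2*t < c*u := by
      by_contra h
      push_neg at h
      linarith only [hB1, mul_pos hup (by linarith only [hc2, hw173, hu32] : (0:ℝ) < c^2 - 2*u),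
        mul_nonneg hcpos.le (by linarith only [h] : (0:ℝ) ≤ 2*t - c*u)]
    have hfpos : 0 < 59*u - 12 + 15*w + (3+11*w)*c := by
      linarith only [hup, hw173, hwc1, hc44]
    rcases le_or_gt 0 ((4+c)*u^2+2*c*u-3*c) with hP1 | hP1
    · -- tangency case (i)
      have hge : 0 ≤ u - ((1+w)*c-6-3*w) := by
        by_contra h
        push_neg at h
        linarith only [hK1, hP1, mul_pos (by linarith only [hc44] : (0:ℝ) < 4+c)
          (mul_pos (by linarith only [h] : (0:ℝ) < ((1+w)*c-6-3*w) - u) hfpos)]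
      have hm2' : 0 < (3*c+3*w-w*c) - u := by
        linarith only [hu32, hw173, hc44, hwc2]
      have hK3 : u^2+(6-4*c)*u+9 = (u - ((1+w)*c-6-3*w))*(u - (3*c+3*w-w*c)) := by
        linear_combination ((-3) + (-2)*w + (1)*w^2) * hc2 + ((6) + (-6)*c + (6)*w) * hw2
      have hG : u^2+(6-4*c)*u+9 ≤ 0 := by
        linarith only [hK3, mul_nonneg hge hm2'.le]
      have key : (4*t - (u^2+2*u-3))*(4*t + (u^2+2*u-3) - 4*c*u)
          = 16*(t^2 - c*u*t + c*u^2 - c*u) - (u-1)^2*(u^2+(6-4*c)*u+9) := by ring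
      have hf1 : 0 < 4*t - (u^2+2*u-3) := by linarith only [hA]
      have hf2 : 0 < 4*c*u - (4*t + (u^2+2*u-3)) := by linarith only [hA, htv]
      linarith only [key, mul_pos hf1 hf2, hq,
        mul_nonneg (sq_nonneg (u-1)) (by linarith only [hG] : (0:ℝ) ≤ -(u^2+(6-4*c)*u+9))]
    · -- tangency case (ii)
      have hlt : u - ((1+w)*c-6-3*w) < 0 := by
        by_contra h
        push_neg at h
        linarith only [hK1, hP1, mul_nonneg (mul_nonneg (by linarith only [hc44] : (0:ℝ) ≤ 4+c) h) hfpos.le]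
      have hK2 : 4*(u^3+c^2*u^2+c^3*u-c^3)
          = (u - ((1+w)*c-6-3*w))*(2*u + ((1+w)*c+3+3*w))^2 := by
        linear_combination ((-3)*c + (3)*w + (3)*w*c + (6)*w^2 + (3)*w^2*c + (3)*w^3 + (1)*w^3*c + (3)*u + (4)*u*c + (6)*u*w + (3)*u*w^2 + (4)*u^2) * hc2 + ((18) + (18)*c + (36)*w + (18)*w*c + (18)*w^2 + (6)*w^2*c + (18)*u + (-6)*u*c + (18)*u*w) * hw2
      have hsq : 0 < 2*u + ((1+w)*c+3+3*w) := by
        linarith only [hup, hwc1, hc44, hw173]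
      have hh : u^3+c^2*u^2+c^3*u-c^3 < 0 := by
        linarith only [hK2, mul_pos (mul_pos (by linarith only [hlt] : (0:ℝ) < ((1+w)*c-6-3*w) - u) hsq) hsq]
      have hI2 : (c*t + u^2)*(c*t - u^2 - c^2*u)
          = c^2*(t^2 - c*u*t + c*u^2 - c*u) - u*(u^3+c^2*u^2+c^3*u-c^3) := by ring
      have p2 : 0 < u^2 + c^2*u - c*t := by
        linarith only [hB1, mul_pos (by positivity : (0:ℝ) < c^2) hup]
      linarith only [hI2, mul_nonneg (by linarith only [hB2] : (0:ℝ) ≤ c*t + u^2) p2.le,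
        mul_nonneg (sq_nonneg c) hq, mul_pos hup (by linarith only [hh] : (0:ℝ) < -(u^3+c^2*u^2+c^3*u-c^3))]

set_option maxHeartbeats 1000000 in
/-- If `P` is a real cubic with nonzero coefficients and
`|q_2(P)| ≥ √(9+6√3)`, `|q_3(P)| ≥ √(9+6√3)`, then all (complex) zeros of `P`
are real. -/
theorem stmt_16 (P : Polynomial ℝ) (hdeg : P.natDegree = 3)
    (hcoeff : ∀ k, k ≤ 3 → P.coeff k ≠ 0)
    (hq2 : Real.sqrt (9 + 6 * Real.sqrt 3) ≤
      |(P.coeff 1) ^ 2 / (P.coeff 0 * P.coeff 2)|)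
    (hq3 : Real.sqrt (9 + 6 * Real.sqrt 3) ≤
      |(P.coeff 2) ^ 2 / (P.coeff 1 * P.coeff 3)|) :
    ∀ z : ℂ, (P.map (algebraMap ℝ ℂ)).IsRoot z → z.im = 0 := by
  intro z hz
  by_contra himne
  have ha0 : P.coeff 0 ≠ 0 := hcoeff 0 (by norm_num)
  have ha1 : P.coeff 1 ≠ 0 := hcoeff 1 (by norm_num)
  have ha2 : P.coeff 2 ≠ 0 := hcoeff 2 (by norm_num)
  have ha3 : P.coeff 3 ≠ 0 := hcoeff 3 (by norm_num)
  set w := Real.sqrt 3 with hwd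
  set c := Real.sqrt (9 + 6*w) with hcd
  have hwpos : 0 < w := Real.sqrt_pos.2 (by norm_num)
  have hw2 : w^2 = 3 := Real.sq_sqrt (by norm_num)
  have hc2 : c^2 = 9 + 6*w := Real.sq_sqrt (by linarith [hwpos.le])
  have hcpos : 0 < c := Real.sqrt_pos.2 (by linarith [hwpos.le])
  set a0 := P.coeff 0 with ha0d
  set a1 := P.coeff 1 with ha1d
  set a2 := P.coeff 2 with ha2d
  set a3 := P.coeff 3 with ha3d
  set p := z.re with hpd
  set q := z.im with hqd
  -- extract the real and imaginary part equations
  have hdm : (P.map (algebraMap ℝ ℂ)).natDegree = 3 := by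
    rw [Polynomial.natDegree_map, hdeg]
  have h0 : Polynomial.eval z (P.map (algebraMap ℝ ℂ)) = 0 := hz
  rw [Polynomial.eval_eq_sum_range, hdm] at h0
  simp only [Finset.sum_range_succ, Finset.sum_range_zero, Polynomial.coeff_map, zero_add,
    pow_zero, pow_one, mul_one, one_mul, pow_succ] at h0
  have hre := congrArg Complex.re h0
  have him := congrArg Complex.im h0
  simp only [Complex.add_re, Complex.add_im, Complex.mul_re, Complex.mul_im,
    Complex.coe_algebraMap, Complex.ofReal_re, Complex.ofReal_im, Complex.zero_re,
    Complex.zero_im, zero_mul, mul_zero, sub_zero, zero_sub, add_zero, zero_add,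
    mul_one, one_mul] at hre him
  have hRe : a0 + a1 * p + a2 * (p^2 - q^2) + a3 * (p^3 - 3*p*q^2) = 0 := by
    linear_combination hre
  have hq0 : q ≠ 0 := himne
  have hE1 : a1 + 2*a2*p + 3*a3*p^2 - a3*q^2 = 0 := by
    have hIm : a1 * q + a2 * (2*p*q) + a3 * (3*p^2*q - q^3) = 0 := by
      linear_combination him
    have h : q * (a1 + 2*a2*p + 3*a3*p^2 - a3*q^2) = 0 := by linear_combination hIm
    rcases mul_eq_zero.mp h with h' | h'
    · exact absurd h' hq0
    · exact h'
  -- the real root r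
  set r : ℝ := -(a2/a3) - 2*p with hrd
  have hr3 : a3 * r = -a2 - 2*p*a3 := by
    rw [hrd]
    field_simp
  have hr : r ≠ 0 := by
    intro h0r
    apply ha0
    have h2 : a2 + 2*p*a3 = 0 := by
      have h3 := hr3; rw [h0r, mul_zero] at h3; linarith
    linear_combination hRe - p*hE1 + (p^2+q^2)*h2
  -- scaled variables
  set u : ℝ := -a2/(a3*r) with hud
  set t : ℝ := a1/(a3*r^2) with htd
  have ha3r : a3*r ≠ 0 := mul_ne_zero ha3 hr
  have ha3r2 : a3*r^2 ≠ 0 := mul_ne_zero ha3 (pow_ne_zero 2 hr)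
  have eu : u*(a3*r) = -a2 := by rw [hud]; field_simp
  have et : t*(a3*r^2) = a1 := by rw [htd]; field_simp
  have hu1r : (u-1)*r = 2*p := by
    have h : ((u-1)*r)*a3 = (2*p)*a3 := by linear_combination eu - hr3
    exact mul_right_cancel₀ ha3 h
  have hσ : (t-u+1)*r^2 = p^2+q^2 := by
    have h : ((t-u+1)*r^2)*a3 = (p^2+q^2)*a3 := by
      linear_combination et - (a3*r)*hu1r - 2*p*hr3 + hE1
    exact mul_right_cancel₀ ha3 h
  have ha0v : a0 = -(a3*r*(p^2+q^2)) := by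
    linear_combination hRe - p*hE1 + (p^2+q^2)*hr3
  -- hypothesis hu
  have hune : u ≠ 0 := by
    rw [hud]
    exact div_ne_zero (neg_ne_zero.2 ha2) ha3r
  -- hypothesis hA
  have hAr : (4*t - (u^2+2*u-3))*r^2 = 4*q^2 := by
    linear_combination 4*hσ - ((u-1)*r + 2*p)*hu1r
  have hA : u^2 + 2*u - 3 < 4*t := by
    by_contra hA'
    push_neg at hA'
    have h1 : 0 ≤ ((u^2+2*u-3) - 4*t)*r^2 :=
      mul_nonneg (by linarith only [hA']) (sq_nonneg r)
    have h2 : 0 < q^2 := lt_of_le_of_ne (sq_nonneg q) (Ne.symm (pow_ne_zero 2 hq0))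
    linarith only [hAr, h1, h2]
  -- hypothesis hB
  have habs3 : c * |a1*a3| ≤ a2^2 := by
    rw [abs_div, abs_of_nonneg (sq_nonneg a2)] at hq3
    exact (le_div_iff₀ (abs_pos.2 (mul_ne_zero ha1 ha3))).1 hq3
  have hsq3 : c^2*(a1*a3)^2 ≤ a2^4 := by
    calc c^2*(a1*a3)^2 = (c*|a1*a3|)^2 := by rw [mul_pow c |a1*a3| 2, sq_abs]
    _ ≤ (a2^2)^2 := by linarith only [mul_self_le_mul_self (by positivity : (0:ℝ) ≤ c*|a1*a3|) habs3]
    _ = a2^4 := by ring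
  have hB : c^2*t^2 ≤ u^4 := by
    refine le_of_mul_le_mul_right ?_ (pow_pos (lt_of_le_of_ne (sq_nonneg (a3*r)) (Ne.symm (pow_ne_zero 2 ha3r))) 2)
    calc c^2*t^2*((a3*r)^2)^2 = c^2*(a1*a3)^2 := by
          linear_combination (c^2*a3^2*(t*(a3*r^2)+a1))*et
    _ ≤ a2^4 := hsq3
    _ = u^4*((a3*r)^2)^2 := by
          linear_combination (-((u*(a3*r))^3 - (u*(a3*r))^2*a2 + (u*(a3*r))*a2^2 - a2^3))*eu
  -- hypothesis hD
  have habs2 : c * |a0*a2| ≤ a1^2 := by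
    rw [abs_div, abs_of_nonneg (sq_nonneg a1)] at hq2
    exact (le_div_iff₀ (abs_pos.2 (mul_ne_zero ha0 ha2))).1 hq2
  have hsq2 : c^2*(a0*a2)^2 ≤ a1^4 := by
    calc c^2*(a0*a2)^2 = (c*|a0*a2|)^2 := by rw [mul_pow c |a0*a2| 2, sq_abs]
    _ ≤ (a1^2)^2 := by linarith only [mul_self_le_mul_self (by positivity : (0:ℝ) ≤ c*|a0*a2|) habs2]
    _ = a1^4 := by ring
  have hD : c^2*(t-u+1)^2*u^2 ≤ t^4 := by
    refine le_of_mul_le_mul_right ?_ (pow_pos (lt_of_le_of_ne (sq_nonneg (a3*r^2)) (Ne.symm (pow_ne_zero 2 ha3r2))) 2)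
    calc c^2*(t-u+1)^2*u^2*((a3*r^2)^2)^2 = c^2*(a0*a2)^2 := by
          linear_combination (c^2*a3^2*r^2*((t-u+1)*r^2+(p^2+q^2))*(u*(a3*r))^2)*hσ
            + (c^2*a3^2*r^2*(p^2+q^2)^2*(u*(a3*r) - a2))*eu
            + (c^2*a2^2*(a3*r*(p^2+q^2) - a0))*ha0v
    _ ≤ a1^4 := hsq2
    _ = t^4*((a3*r^2)^2)^2 := by
          linear_combination (-((t*(a3*r^2))^3 + (t*(a3*r^2))^2*a1 + (t*(a3*r^2))*a1^2 + a1^3))*et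
  exact core_lemma w c t u hw2 hwpos hc2 hcpos hune hA hB hD
end

section
/- For every ε > 0 there exists a polynomial P of degree 3 with all coefficients real and nonzero, such that |q_2(P)| > √(9 + 6√3) - ε and |q_3(P)| > √(9 + 6√3) - ε, and P has a nonreal root. -/
open Polynomial

lemma aux_sqrt9 : Real.sqrt 9 = 3 := by
  rw [show (9:ℝ) = 3 ^ 2 by norm_num, Real.sqrt_sq]; norm_num

lemma aux_sqrt3_lt : Real.sqrt 3 < 2 := by
  have : Real.sqrt 3 < Real.sqrt 4 := by
    apply Real.sqrt_lt_sqrt <;> norm_num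
  rwa [show (4:ℝ) = 2 ^ 2 by norm_num, Real.sqrt_sq (by norm_num)] at this

lemma aux_sqrt3_gt : (1.7 : ℝ) < Real.sqrt 3 := by
  have : Real.sqrt (1.7 ^ 2) < Real.sqrt 3 := by
    apply Real.sqrt_lt_sqrt <;> norm_num
  rwa [Real.sqrt_sq (by norm_num)] at this

lemma aux_coeffs (q : ℝ) :
    (X ^ 3 + C (-q) * X ^ 2 + C q * X + C 1 : ℝ[X]).coeff 0 = 1 ∧
    (X ^ 3 + C (-q) * X ^ 2 + C q * X + C 1 : ℝ[X]).coeff 1 = q ∧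
    (X ^ 3 + C (-q) * X ^ 2 + C q * X + C 1 : ℝ[X]).coeff 2 = -q ∧
    (X ^ 3 + C (-q) * X ^ 2 + C q * X + C 1 : ℝ[X]).coeff 3 = 1 := by
  refine ⟨?_, ?_, ?_, ?_⟩ <;>
    simp [coeff_add, coeff_C, coeff_one, coeff_X_pow, coeff_C_mul, coeff_X]

lemma aux_coeffs' {R : Type*} [CommRing R] (u v w : R) :
    (X ^ 3 + C u * X ^ 2 + C v * X + C w : R[X]).coeff 2 = u ∧
    (X ^ 3 + C u * X ^ 2 + C v * X + C w : R[X]).coeff 1 = v ∧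
    (X ^ 3 + C u * X ^ 2 + C v * X + C w : R[X]).coeff 0 = w := by
  refine ⟨?_, ?_, ?_⟩ <;>
    · simp only [coeff_add, coeff_C_mul, coeff_X_pow, coeff_X, coeff_C]
      norm_num

lemma aux_natDegree (q : ℝ) :
    (X ^ 3 + C (-q) * X ^ 2 + C q * X + C 1 : ℝ[X]).natDegree = 3 := by
  compute_degree!

/-- Key lemma: if `0 < q` and `q^2 < 9 + 6√3`, the cubic `X^3 - qX^2 + qX + 1`
has a nonreal complex root. -/
lemma aux_nonreal_root (q : ℝ) (hq0 : 0 < q)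
    (hq2 : q ^ 2 < 9 + 6 * Real.sqrt 3) :
    ∃ z : ℂ, ((X ^ 3 + C (-q) * X ^ 2 + C q * X + C 1 : ℝ[X]).map
      (algebraMap ℝ ℂ)).IsRoot z ∧ z.im ≠ 0 := by
  by_contra hcon
  push_neg at hcon
  set P : ℝ[X] := X ^ 3 + C (-q) * X ^ 2 + C q * X + C 1 with hP
  set Pc : ℂ[X] := P.map (algebraMap ℝ ℂ) with hPc
  have hPc_eq : Pc = X ^ 3 + C ((-q : ℝ) : ℂ) * X ^ 2 + C ((q : ℝ) : ℂ) * X + C 1 := by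
    simp [hPc, hP, Polynomial.map_add, Polynomial.map_mul, Polynomial.map_pow]
  have hmonic : Pc.Monic := by
    apply Polynomial.monic_of_natDegree_le_of_coeff_eq_one 3
    · rw [hPc_eq]; compute_degree
    · rw [hPc_eq]
      simp [coeff_add, coeff_C, coeff_one, coeff_X_pow, coeff_C_mul, coeff_X]
  have hdeg : Pc.natDegree = 3 := by
    rw [hPc_eq]; compute_degree!
  have hsplits : Pc.Splits := IsAlgClosed.splits _
  have hcard : Pc.roots.card = 3 := by
    rw [(Polynomial.splits_iff_card_roots).mp hsplits, hdeg]
  obtain ⟨a, b, c, habc⟩ := Multiset.card_eq_three.mp hcard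
  have hprod : Pc = (Pc.roots.map fun r => X - C r).prod :=
    hsplits.eq_prod_roots_of_monic hmonic
  rw [habc] at hprod
  have hprod' : Pc = (X - C a) * (X - C b) * (X - C c) := by
    rw [hprod]; simp [Multiset.map_cons, mul_assoc]
  -- roots are real
  have him : ∀ r : ℂ, r ∈ ({a, b, c} : Multiset ℂ) → r.im = 0 := by
    intro r hr
    apply hcon
    rw [← habc] at hr
    exact (Polynomial.isRoot_of_mem_roots hr)
  have ha : a.im = 0 := him a (by simp)
  have hb : b.im = 0 := him b (by simp)
  have hc : c.im = 0 := him c (by simp)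
  have haR : a = (a.re : ℂ) := Complex.ext rfl (by simp [ha])
  have hbR : b = (b.re : ℂ) := Complex.ext rfl (by simp [hb])
  have hcR : c = (c.re : ℂ) := Complex.ext rfl (by simp [hc])
  set x := a.re; set y := b.re; set z := c.re
  have hexp : Pc = X ^ 3 + C (-(a + b + c)) * X ^ 2
      + C (a * b + b * c + c * a) * X + C (-(a * b * c)) := by
    rw [hprod']
    simp only [map_add, map_mul, map_neg]
    ring
  have key : X ^ 3 + C ((-q : ℝ) : ℂ) * X ^ 2 + C ((q : ℝ) : ℂ) * X + C 1
      = X ^ 3 + C (-(a + b + c)) * X ^ 2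
        + C (a * b + b * c + c * a) * X + C (-(a * b * c)) := by
    rw [← hPc_eq, hexp]
  have key1 := aux_coeffs' ((-q : ℝ) : ℂ) ((q : ℝ) : ℂ) 1
  have key2 := aux_coeffs' (-(a + b + c)) (a * b + b * c + c * a) (-(a * b * c))
  have e2 : ((-q : ℝ) : ℂ) = -(a + b + c) := by
    rw [← key1.1, ← key2.1, key]
  have e1 : ((q : ℝ) : ℂ) = a * b + b * c + c * a := by
    rw [← key1.2.1, ← key2.2.1, key]
  have e0 : (1 : ℂ) = -(a * b * c) := by
    rw [← key1.2.2, ← key2.2.2, key]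
  -- transfer to ℝ
  rw [haR, hbR, hcR] at e2 e1 e0
  push_cast at e2 e1 e0
  have r2 : x + y + z = q := by
    have h : ((x + y + z : ℝ) : ℂ) = ((q : ℝ) : ℂ) := by push_cast; linear_combination e2
    exact_mod_cast h
  have r1 : x * y + y * z + z * x = q := by
    have h : ((x * y + y * z + z * x : ℝ) : ℂ) = ((q : ℝ) : ℂ) := by
      push_cast; linear_combination -e1
    exact_mod_cast h
  have r0 : x * y * z = -1 := by
    have h : ((x * y * z : ℝ) : ℂ) = ((-1 : ℝ) : ℂ) := by push_cast; linear_combination e0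
    exact_mod_cast h
  -- discriminant identity
  have hid : (x - y) ^ 2 * (y - z) ^ 2 * (z - x) ^ 2
      = (x + y + z) ^ 2 * (x * y + y * z + z * x) ^ 2
        - 4 * (x * y + y * z + z * x) ^ 3
        - 4 * (x + y + z) ^ 3 * (x * y * z)
        + 18 * (x + y + z) * (x * y + y * z + z * x) * (x * y * z)
        - 27 * (x * y * z) ^ 2 := by ring
  rw [r2, r1, r0] at hid
  have hs2 : Real.sqrt 3 ^ 2 = 3 := Real.sq_sqrt (by norm_num)
  have hs1 : (1.7 : ℝ) < Real.sqrt 3 := aux_sqrt3_gt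
  have hup : q ^ 2 - 9 < 6 * Real.sqrt 3 := by linarith
  have hlo : -(6 * Real.sqrt 3) < q ^ 2 - 9 := by nlinarith [sq_nonneg q]
  have hsq : (q ^ 2 - 9) ^ 2 < 108 := by nlinarith
  have hΔneg : q ^ 2 * q ^ 2 - 4 * q ^ 3 - 4 * q ^ 3 * (-1)
      + 18 * q * q * (-1) - 27 * (-1 : ℝ) ^ 2 < 0 := by nlinarith
  have hpos : 0 ≤ (x - y) ^ 2 * (y - z) ^ 2 * (z - x) ^ 2 := by positivity
  linarith [hid, hΔneg, hpos]

/-- For every `ε > 0` there exists a real cubic with nonzero coefficients such that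
`|q_2(P)| > √(9+6√3) - ε` and `|q_3(P)| > √(9+6√3) - ε`, having a nonreal root. -/
theorem stmt_17 (ε : ℝ) (hε : 0 < ε) :
    ∃ P : Polynomial ℝ, P.natDegree = 3 ∧
      (∀ k, k ≤ 3 → P.coeff k ≠ 0) ∧
      Real.sqrt (9 + 6 * Real.sqrt 3) - ε <
        |(P.coeff 1) ^ 2 / (P.coeff 0 * P.coeff 2)| ∧
      Real.sqrt (9 + 6 * Real.sqrt 3) - ε <
        |(P.coeff 2) ^ 2 / (P.coeff 1 * P.coeff 3)| ∧
      (∃ z : ℂ, (P.map (algebraMap ℝ ℂ)).IsRoot z ∧ z.im ≠ 0) := by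
  set Q := Real.sqrt (9 + 6 * Real.sqrt 3) with hQ
  have h3' : (0:ℝ) ≤ Real.sqrt 3 := Real.sqrt_nonneg 3
  have hQ3 : 3 ≤ Q := by
    calc (3:ℝ) = Real.sqrt 9 := aux_sqrt9.symm
    _ ≤ Q := Real.sqrt_le_sqrt (by linarith)
  set q := Q - min ε 1 / 2 with hq
  have hmin0 : 0 < min ε 1 := lt_min hε one_pos
  have hmin1 : min ε 1 ≤ 1 := min_le_right _ _
  have hq0 : 0 < q := by rw [hq]; linarith
  have hqQ : q < Q := by rw [hq]; linarith
  have hqε : Q - ε < q := by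
    have := min_le_left ε 1
    rw [hq]; linarith
  have hq2 : q ^ 2 < 9 + 6 * Real.sqrt 3 := by
    have hQ2 : Q ^ 2 = 9 + 6 * Real.sqrt 3 := Real.sq_sqrt (by linarith)
    nlinarith
  have hqne : q ≠ 0 := ne_of_gt hq0
  refine ⟨X ^ 3 + C (-q) * X ^ 2 + C q * X + C 1, aux_natDegree q, ?_, ?_, ?_,
    aux_nonreal_root q hq0 hq2⟩
  · obtain ⟨c0, c1, c2, c3⟩ := aux_coeffs q
    intro k hk
    interval_cases k
    · rw [c0]; norm_num
    · rw [c1]; exact hqne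
    · rw [c2]; simpa using hqne
    · rw [c3]; norm_num
  · obtain ⟨c0, c1, c2, c3⟩ := aux_coeffs q
    rw [c0, c1, c2]
    rw [show q ^ 2 / (1 * -q) = -q by
      rw [one_mul, div_neg, sq, mul_div_assoc, div_self hqne, mul_one]]
    rw [abs_neg, abs_of_pos hq0]
    exact hqε
  · obtain ⟨c0, c1, c2, c3⟩ := aux_coeffs q
    rw [c1, c2, c3]
    rw [show (-q) ^ 2 / (q * 1) = q by
      rw [mul_one, neg_sq, sq, mul_div_assoc, div_self hqne, mul_one]]
    rw [abs_of_pos hq0]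
    exact hqε
end

section
/- For every positive integer n and every c > 0, the polynomial P(z) = ∑_{k=0}^{2n} c^{k(2n-k)/2} z^k − 2 c^{n²/2} z^n satisfies |q_k(P)| = c for all k = 2, 3, …, 2n; moreover, when c = b_{2n}, the point z = 1 is a multiple root of P (that is, P(1) = 0 and P′(1) = 0). -/
open Finset Polynomial

/-- abbreviation for the coefficient -/
noncomputable def eE (n : ℕ) (c : ℝ) (k : ℕ) : ℝ :=
  c ^ (((k : ℝ) * (2 * (n : ℝ) - (k : ℝ))) / 2)

lemma eE_pos {c : ℝ} (hc : 0 < c) (n k : ℕ) : 0 < eE n c k :=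
  Real.rpow_pos_of_pos hc _

lemma aux_sum (n : ℕ) {c : ℝ} (hc : 0 < c)
    (h : 1 - 2 * ∑ k ∈ Finset.Icc 1 n, c ^ (-(k : ℝ) ^ 2 / 2) = 0) :
    ∑ k ∈ Finset.range (2 * n + 1), eE n c k = 2 * c ^ ((n : ℝ) ^ 2 / 2) := by
  have hA : ∑ j ∈ Finset.range (n + 1), c ^ (-((j : ℕ) : ℝ) ^ 2 / 2)
      = 1 + ∑ j ∈ Finset.Icc 1 n, c ^ (-(j : ℝ) ^ 2 / 2) := by
    have hrange : Finset.range (n + 1) = insert 0 (Finset.Icc 1 n) := by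
      ext x; simp [Finset.mem_range, Finset.mem_Icc]; omega
    rw [hrange, Finset.sum_insert (by simp)]
    norm_num
  have hB : ∑ i ∈ Finset.range n, c ^ (-(((i : ℕ) : ℝ) + 1) ^ 2 / 2)
      = ∑ j ∈ Finset.Icc 1 n, c ^ (-(j : ℝ) ^ 2 / 2) := by
    have hs := Finset.sum_range_succ' (fun j : ℕ => c ^ (-((j : ℕ) : ℝ) ^ 2 / 2)) n
    rw [hA] at hs
    have hcongr : ∑ i ∈ Finset.range n, c ^ (-(((i + 1 : ℕ)) : ℝ) ^ 2 / 2)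
        = ∑ i ∈ Finset.range n, c ^ (-(((i : ℕ) : ℝ) + 1) ^ 2 / 2) := by
      apply Finset.sum_congr rfl
      intro i _
      congr 1
      push_cast
      ring
    simp only [Nat.cast_zero] at hs
    rw [hcongr] at hs
    have h0 : c ^ (-(0 : ℝ) ^ 2 / 2) = 1 := by norm_num
    rw [h0] at hs
    linarith
  have key : ∑ k ∈ Finset.range (2 * n + 1), c ^ (-(((k : ℕ) : ℝ) - (n : ℝ)) ^ 2 / 2)
      = 2 := by
    have hsplit : 2 * n + 1 = (n + 1) + n := by ring
    rw [hsplit, Finset.sum_range_add]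
    have h2 : ∀ i ∈ Finset.range n,
        c ^ (-((((n + 1 + i : ℕ)) : ℝ) - (n : ℝ)) ^ 2 / 2)
          = c ^ (-(((i : ℕ) : ℝ) + 1) ^ 2 / 2) := by
      intro i _
      congr 1
      push_cast
      ring
    rw [Finset.sum_congr rfl h2, hB]
    have hrefl := Finset.sum_range_reflect
      (fun k : ℕ => c ^ (-(((k : ℕ) : ℝ) - (n : ℝ)) ^ 2 / 2)) (n + 1)
    have h1 : ∀ j ∈ Finset.range (n + 1),
        c ^ (-((((n + 1 - 1 - j : ℕ)) : ℝ) - (n : ℝ)) ^ 2 / 2)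
          = c ^ (-((j : ℕ) : ℝ) ^ 2 / 2) := by
      intro j hj
      simp only [Finset.mem_range] at hj
      have hj' : j ≤ n := by omega
      congr 1
      have he : (n + 1 - 1 - j : ℕ) = n - j := by omega
      rw [he, Nat.cast_sub hj']
      ring
    rw [← hrefl, Finset.sum_congr rfl h1, hA]
    linarith
  have hterm : ∀ k ∈ Finset.range (2 * n + 1),
      eE n c k = c ^ ((n : ℝ) ^ 2 / 2) * c ^ (-(((k : ℕ) : ℝ) - (n : ℝ)) ^ 2 / 2) := by
    intro k _
    unfold eE
    rw [← Real.rpow_add hc]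
    congr 1
    ring
  rw [Finset.sum_congr rfl hterm, ← Finset.mul_sum, key]
  ring


lemma eE_reflect {c : ℝ} {n k : ℕ} (hk : k ≤ 2 * n) :
    eE n c (2 * n - k) = eE n c k := by
  unfold eE
  congr 1
  rw [Nat.cast_sub hk]
  push_cast
  ring

lemma aux_T (n : ℕ) (c : ℝ) :
    ∑ k ∈ Finset.range (2 * n + 1), eE n c k * (k : ℝ)
      = (n : ℝ) * ∑ k ∈ Finset.range (2 * n + 1), eE n c k := by
  have hrefl := Finset.sum_range_reflect (fun k : ℕ => eE n c k * (k : ℝ)) (2 * n + 1)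
  have h1 : ∀ j ∈ Finset.range (2 * n + 1),
      eE n c (2 * n + 1 - 1 - j) * ((2 * n + 1 - 1 - j : ℕ) : ℝ)
        = eE n c j * (2 * (n : ℝ) - (j : ℝ)) := by
    intro j hj
    simp only [Finset.mem_range] at hj
    have hj' : j ≤ 2 * n := by omega
    have he : (2 * n + 1 - 1 - j : ℕ) = 2 * n - j := by omega
    rw [he, eE_reflect hj', Nat.cast_sub hj']
    push_cast
    ring
  rw [Finset.sum_congr rfl h1] at hrefl
  have h2 : ∑ j ∈ Finset.range (2 * n + 1), eE n c j * (2 * (n : ℝ) - (j : ℝ))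
      = 2 * (n : ℝ) * (∑ k ∈ Finset.range (2 * n + 1), eE n c k)
        - ∑ k ∈ Finset.range (2 * n + 1), eE n c k * (k : ℝ) := by
    rw [Finset.mul_sum, ← Finset.sum_sub_distrib]
    exact Finset.sum_congr rfl (fun j _ => by ring)
  rw [h2] at hrefl
  linarith

/-- For every positive integer `n` and `c > 0`, the polynomial
`P(z) = ∑_{k=0}^{2n} c^{k(2n-k)/2} z^k − 2 c^{n²/2} z^n` satisfies `|q_k(P)| = c`
for all `k = 2, …, 2n`; moreover, when `c = b_{2n}` (i.e. `c ∈ (1,∞)` satisfies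
`1 - 2∑_{k=1}^n c^{-k²/2} = 0`), the point `z = 1` is a multiple root of `P`. -/
theorem stmt_18 (n : ℕ) (hn : 0 < n) (c : ℝ) (hc : 0 < c)
    (P : Polynomial ℝ)
    (hP : P = (∑ k ∈ Finset.range (2 * n + 1),
        Polynomial.C (c ^ (((k : ℝ) * (2 * (n : ℝ) - (k : ℝ))) / 2)) * Polynomial.X ^ k)
        - Polynomial.C (2 * c ^ (((n : ℝ) ^ 2) / 2)) * Polynomial.X ^ n) :
    (∀ k, 2 ≤ k → k ≤ 2 * n →
      |(P.coeff (k - 1)) ^ 2 / (P.coeff (k - 2) * P.coeff k)| = c) ∧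
    ((1 < c ∧ 1 - 2 * ∑ k ∈ Finset.Icc 1 n, c ^ (-(k : ℝ) ^ 2 / 2) = 0) →
      P.eval 1 = 0 ∧ P.derivative.eval 1 = 0) := by
  have hcoeff : ∀ j, j ≤ 2 * n →
      P.coeff j = (if j = n then (-1 : ℝ) else 1) * eE n c j := by
    intro j hj
    have hjn : eE n c n = c ^ ((n : ℝ) ^ 2 / 2) := by
      unfold eE; congr 1; ring
    rw [hP, Polynomial.coeff_sub, Polynomial.finset_sum_coeff]
    simp only [Polynomial.coeff_C_mul, Polynomial.coeff_X_pow, mul_ite, mul_one, mul_zero]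
    rw [Finset.sum_ite_eq]
    simp only [Finset.mem_range, show j < 2 * n + 1 by omega, if_true]
    by_cases hjn' : j = n
    · subst hjn'
      simp only [if_true]
      unfold eE at hjn ⊢
      rw [hjn]
      ring
    · simp only [hjn', if_false]
      unfold eE
      ring
  constructor
  · intro k h2 hk
    rw [hcoeff (k - 1) (by omega), hcoeff (k - 2) (by omega), hcoeff k hk]
    have habs1 : ∀ j : ℕ, |(if j = n then (-1 : ℝ) else 1)| = 1 := by
      intro j; split_ifs <;> simp
    have hpos := fun j => eE_pos hc n j
    rw [abs_div, abs_pow, abs_mul, abs_mul, abs_mul, abs_mul,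
      habs1, habs1, habs1, one_mul, one_mul, one_mul,
      abs_of_pos (hpos (k - 1)), abs_of_pos (hpos (k - 2)), abs_of_pos (hpos k)]
    have hc1 : ((k - 1 : ℕ) : ℝ) = (k : ℝ) - 1 := by
      rw [Nat.cast_sub (by omega)]; norm_num
    have hc2 : ((k - 2 : ℕ) : ℝ) = (k : ℝ) - 2 := by
      rw [Nat.cast_sub (by omega)]; norm_num
    unfold eE
    rw [pow_two, ← Real.rpow_add hc, ← Real.rpow_add hc, ← Real.rpow_sub hc]
    conv_rhs => rw [← Real.rpow_one c]
    congr 1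
    rw [hc1, hc2]
    ring
  · rintro ⟨-, hzero⟩
    have hS := aux_sum n hc hzero
    have hT := aux_T n c
    unfold eE at hS hT
    constructor
    · rw [hP]
      simp only [Polynomial.eval_sub, Polynomial.eval_finset_sum, Polynomial.eval_mul,
        Polynomial.eval_C, Polynomial.eval_pow, Polynomial.eval_X, one_pow, mul_one]
      rw [hS]
      ring
    · rw [hP]
      simp only [Polynomial.derivative_sub, Polynomial.derivative_sum,
        Polynomial.derivative_C_mul_X_pow, Polynomial.eval_sub, Polynomial.eval_finset_sum,
        Polynomial.eval_mul, Polynomial.eval_C, Polynomial.eval_pow, Polynomial.eval_X,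
        one_pow, mul_one]
      rw [hT, hS]
      ring
end
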